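/- arXiv:1302.6863 — 5 statements merged into one kernel-verified Lean document; each statement's English description precedes it below -/
import Mathlib

section
/- Let G be a finite simple bipartite graph whose vertex set is partitioned into parts X and Y (every edge of G has one endpoint in X and one endpoint in Y). Then the number of vertices u ∈ Y whose degree in G is strictly greater than 2∇₁(G) is at most 2∇₁(G)·|X|. -/
/-- `H` is a shallow minor of `G` at depth `d`: there are pairwise disjoint nonempty
branch sets `ψ w ⊆ V(G)`, each inducing a subgraph of radius at most `d`, such that
distinct vertices of `H` are adjacent iff `G` has an edge between the corresponding
branch sets. -/
def IsShallowMinorAtDepth {V W : Type*} (G : SimpleGraph V) (d : ℕ)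
    (H : SimpleGraph W) : Prop :=
  ∃ ψ : W → Set V,
    (∀ w, (ψ w).Nonempty) ∧
    (∀ w₁ w₂, w₁ ≠ w₂ → Disjoint (ψ w₁) (ψ w₂)) ∧
    (∀ w, ∃ c : ψ w, ∀ u : ψ w,
      ∃ p : (SimpleGraph.induce (ψ w) G).Walk c u, p.length ≤ d) ∧
    (∀ w₁ w₂, w₁ ≠ w₂ →
      (H.Adj w₁ w₂ ↔ ∃ v₁ ∈ ψ w₁, ∃ v₂ ∈ ψ w₂, G.Adj v₁ v₂))

/-- The greatest reduced average density (grad) of rank `d`: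
the supremum of `|E(H)|/|V(H)|` over nonempty shallow minors `H` of `G` at depth `d`. -/
noncomputable def grad {V : Type*} (G : SimpleGraph V) (d : ℕ) : ℝ :=
  sSup { q : ℝ | ∃ (n : ℕ) (H : SimpleGraph (Fin n)), 0 < n ∧
    IsShallowMinorAtDepth G d H ∧ q = (H.edgeSet.ncard : ℝ) / (n : ℝ) }


open SimpleGraph in
lemma density_le_grad {V : Type*} [Fintype V] (G : SimpleGraph V) {d n : ℕ}
    (H : SimpleGraph (Fin n)) (hn : 0 < n) (hm : IsShallowMinorAtDepth G d H) :
    (H.edgeSet.ncard : ℝ) / n ≤ grad G d := by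
  apply le_csSup
  · refine ⟨(Fintype.card V : ℝ), ?_⟩
    rintro q ⟨n, H, hn, ⟨ψ, hne, hdis, -, -⟩, rfl⟩
    -- n ≤ card V
    have hinj : Function.Injective (fun i => (hne i).choose) := by
      intro i j hij
      by_contra hij'
      have h1 := (hne i).choose_spec
      have h2 := (hne j).choose_spec
      dsimp only at hij
      rw [hij] at h1
      exact Set.disjoint_left.mp (hdis i j hij') h1 h2
    have hcard : n ≤ Fintype.card V := by
      simpa using Fintype.card_le_of_injective _ hinj
    have hedge : H.edgeSet.ncard ≤ n * Fintype.card V := by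
      have h1 : H.edgeSet.ncard ≤ Nat.card (Sym2 (Fin n)) := by
        rw [← Nat.card_coe_set_eq]
        exact Nat.card_le_card_of_injective _ Subtype.val_injective
      have h2 : Nat.card (Sym2 (Fin n)) = n * (n + 1) / 2 := by
        simp [Nat.card_eq_fintype_card, Sym2.card, Nat.choose_two_right, Nat.mul_comm]
      have h3 : n * (n + 1) / 2 ≤ n * Fintype.card V := by
        have : n * (n + 1) ≤ (n * Fintype.card V) * 2 := by nlinarith [hn, hcard]
        omega
      omega
    rw [div_le_iff₀ (by positivity)]
    calc (H.edgeSet.ncard : ℝ) ≤ (n * Fintype.card V : ℕ) := by exact_mod_cast hedge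
      _ = (Fintype.card V : ℝ) * n := by push_cast; ring
  · exact ⟨n, H, hn, hm, rfl⟩


lemma grad_nonneg' {V : Type*} [Fintype V] (G : SimpleGraph V) (d : ℕ) (v : V) :
    0 ≤ grad G d := by
  have h := density_le_grad G (d := d) (⊥ : SimpleGraph (Fin 1)) one_pos ?_
  · simpa using h
  · refine ⟨fun _ => {v}, fun _ => ⟨v, rfl⟩, ?_, ?_, ?_⟩
    · intro w₁ w₂ h; exact absurd (Subsingleton.elim w₁ w₂) h
    · intro w
      refine ⟨⟨v, rfl⟩, ?_⟩
      rintro ⟨u, rfl⟩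
      exact ⟨SimpleGraph.Walk.nil, by simp⟩
    · intro w₁ w₂ h; exact absurd (Subsingleton.elim w₁ w₂) h


lemma induce_adj_of {V : Type*} {G : SimpleGraph V} {s : Set V} {a b : s} (h : G.Adj ↑a ↑b) :
    (SimpleGraph.induce s G).Adj a b := h


open SimpleGraph in
lemma greedy {V : Type*} [Fintype V] [DecidableEq V] (G : SimpleGraph V) (X Y : Set V)
    (hdisj : Disjoint X Y)
    (hbip : ∀ u v, G.Adj u v → (u ∈ X ∧ v ∈ Y) ∨ (u ∈ Y ∧ v ∈ X))
    (S : Finset V)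
    (hS : ∀ u ∈ S, u ∈ Y ∧ 2 * grad G 1 < ((G.neighborSet u).ncard : ℝ)) :
    ∃ (f : V → V) (E : Finset (Sym2 V)),
      (∀ u ∈ S, G.Adj u (f u)) ∧
      E.card = S.card ∧
      (∀ e ∈ E, ∃ a b, a ∈ X ∧ b ∈ X ∧ a ≠ b ∧ e = s(a,b) ∧
        ∃ u ∈ S, f u = a ∧ G.Adj u b) := by
  induction S using Finset.induction_on with
  | empty => exact ⟨id, ∅, by simp, by simp, by simp⟩
  | @insert u S hu ih =>
    obtain ⟨f, E, hf, hcard, hreal⟩ := ih (fun v hv => hS v (Finset.mem_insert_of_mem hv))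
    have huY : u ∈ Y := (hS u (Finset.mem_insert_self u S)).1
    have hudeg : 2 * grad G 1 < ((G.neighborSet u).ncard : ℝ) :=
      (hS u (Finset.mem_insert_self u S)).2
    have huX : u ∉ X := fun h => Set.disjoint_left.mp hdisj h huY
    have hNX : ∀ x ∈ G.neighborSet u, x ∈ X := by
      intro x hx
      rcases hbip u x hx with ⟨h1, _⟩ | ⟨_, h2⟩
      · exact absurd h1 huX
      · exact h2
    have hSY : ∀ v ∈ S, v ∈ Y := fun v hv => (hS v (Finset.mem_insert_of_mem hv)).1
    have hfX : ∀ v ∈ S, f v ∈ X := by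
      intro v hv
      rcases hbip v (f v) (hf v hv) with ⟨h1, _⟩ | ⟨_, h2⟩
      · exact absurd h1 (fun h => Set.disjoint_left.mp hdisj h (hSY v hv))
      · exact h2
    by_cases hfree : ∃ a ∈ G.neighborSet u, ∃ b ∈ G.neighborSet u, a ≠ b ∧ s(a,b) ∉ E
    · obtain ⟨a, ha, b, hb, hab, hE⟩ := hfree
      refine ⟨Function.update f u a, insert s(a,b) E, ?_, ?_, ?_⟩
      · intro v hv
        rcases Finset.mem_insert.mp hv with rfl | hv
        · rw [Function.update_self]; exact ha
        · rw [Function.update_of_ne (ne_of_mem_of_not_mem hv hu)]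
          exact hf v hv
      · rw [Finset.card_insert_of_notMem hE, Finset.card_insert_of_notMem hu, hcard]
      · intro e he
        rcases Finset.mem_insert.mp he with rfl | he
        · exact ⟨a, b, hNX a ha, hNX b hb, hab, rfl,
            u, Finset.mem_insert_self u S, Function.update_self u a f, hb⟩
        · obtain ⟨a', b', h1, h2, h3, h4, u', hu', h5, h6⟩ := hreal e he
          refine ⟨a', b', h1, h2, h3, h4, u', Finset.mem_insert_of_mem hu', ?_, h6⟩
          rw [Function.update_of_ne (ne_of_mem_of_not_mem hu' hu)]; exact h5
    · exfalso
      push_neg at hfree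
      set N := G.neighborSet u with hN
      set k := N.ncard with hk
      have hr0 : 0 ≤ grad G 1 := grad_nonneg' G 1 u
      have hk1 : 0 < k := by
        by_contra h
        push_neg at h
        interval_cases k
        · simp at hudeg; linarith
      have huN : u ∉ N := fun h => G.irrefl h
      set T : Set V := insert u N with hT
      have hTcard : T.ncard = k + 1 := Set.ncard_insert_of_notMem huN (Set.toFinite N)
      have hnc : Nat.card T = k + 1 := by
        rw [Nat.card_coe_set_eq]; exact hTcard
      let e : Fin (k+1) ≃ T := (finCongr hnc.symm).trans (Finite.equivFin ↥T).symm
      set B : V → Set V :=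
        fun x => if x = u then {u} else insert x {v | v ∈ S ∧ f v = x} with hB
      have hBu : B u = {u} := by simp [hB]
      have hBx : ∀ x, x ≠ u → B x = insert x {v | v ∈ S ∧ f v = x} := by
        intro x hx; simp [hB, hx]
      have hBne : ∀ x, (B x).Nonempty := by
        intro x
        by_cases hx : x = u
        · rw [hx, hBu]; exact ⟨u, rfl⟩
        · rw [hBx x hx]; exact ⟨x, Set.mem_insert _ _⟩
      have hBdisj : ∀ x y, (x = u ∨ x ∈ X) → (y = u ∨ y ∈ X) → x ≠ y →
          Disjoint (B x) (B y) := by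
        intro x y hx hy hxy
        rw [Set.disjoint_left]
        intro v hvx hvy
        by_cases hxu : x = u
        · have hyu : y ≠ u := fun h => hxy (hxu.trans h.symm)
          rw [hxu, hBu] at hvx
          rw [hBx y hyu] at hvy
          have hvu : v = u := Set.mem_singleton_iff.mp hvx
          rcases hvy with hvy | ⟨hvS, _⟩
          · exact hyu (hvy.symm.trans hvu)
          · exact hu (hvu ▸ hvS)
        · by_cases hyu : y = u
          · rw [hyu, hBu] at hvy
            rw [hBx x hxu] at hvx
            have hvu : v = u := Set.mem_singleton_iff.mp hvy
            rcases hvx with hvx | ⟨hvS, _⟩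
            · exact hxu (hvx.symm.trans hvu)
            · exact hu (hvu ▸ hvS)
          · rw [hBx x hxu] at hvx
            rw [hBx y hyu] at hvy
            have hxX : x ∈ X := hx.resolve_left hxu
            have hyX : y ∈ X := hy.resolve_left hyu
            rcases hvx with hvx | ⟨hvS, hvf⟩
            · rcases hvy with hvy | ⟨hvS', hvf'⟩
              · exact hxy (hvx.symm.trans hvy)
              · exact Set.disjoint_left.mp hdisj (hvx.symm ▸ hxX) (hSY v hvS')
            · rcases hvy with hvy | ⟨hvS', hvf'⟩
              · exact Set.disjoint_left.mp hdisj (hvy.symm ▸ hyX) (hSY v hvS)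
              · exact hxy (hvf.symm.trans hvf')
      have hBrad : ∀ x, ∃ c : (B x), ∀ w : (B x),
          ∃ p : (SimpleGraph.induce (B x) G).Walk c w, p.length ≤ 1 := by
        intro x
        by_cases hx : x = u
        · refine ⟨⟨u, by rw [hx, hBu]; rfl⟩, ?_⟩
          rintro ⟨w, hw⟩
          have hw' : w = u := by rw [hx, hBu] at hw; exact Set.mem_singleton_iff.mp hw
          exact ⟨SimpleGraph.Walk.nil.copy rfl (Subtype.ext hw'.symm), by simp⟩
        · refine ⟨⟨x, by rw [hBx x hx]; exact Set.mem_insert _ _⟩, ?_⟩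
          rintro ⟨w, hw⟩
          have hw' := hw
          rw [hBx x hx] at hw'
          rcases hw' with hw' | ⟨hwS, hwf⟩
          · exact ⟨SimpleGraph.Walk.nil.copy rfl (Subtype.ext hw'.symm), by simp⟩
          · have hadj : G.Adj x w := by
              have := hf w hwS
              rw [hwf] at this
              exact this.symm
            exact ⟨SimpleGraph.Walk.cons (induce_adj_of hadj) SimpleGraph.Walk.nil, by simp⟩
      have hconn : ∀ t₁ t₂ : V, t₁ ∈ T → t₂ ∈ T → t₁ ≠ t₂ →
          ∃ v₁ ∈ B t₁, ∃ v₂ ∈ B t₂, G.Adj v₁ v₂ := by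
        intro t₁ t₂ ht₁ ht₂ hne
        have hTN : ∀ t, t ∈ T → t ≠ u → t ∈ N := by
          intro t ht htu
          rcases ht with h | h
          · exact absurd h htu
          · exact h
        by_cases h1 : t₁ = u
        · have ht₂u : t₂ ≠ u := fun h => hne (h1.trans h.symm)
          have ht₂N : t₂ ∈ N := hTN t₂ ht₂ ht₂u
          refine ⟨t₁, ?_, t₂, ?_, ?_⟩
          · rw [h1, hBu]; rfl
          · rw [hBx t₂ ht₂u]; exact Set.mem_insert _ _
          · rw [h1]; exact ht₂N
        · by_cases h2 : t₂ = u
          · have ht₁N : t₁ ∈ N := hTN t₁ ht₁ h1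
            refine ⟨t₁, ?_, t₂, ?_, ?_⟩
            · rw [hBx t₁ h1]; exact Set.mem_insert _ _
            · rw [h2, hBu]; rfl
            · rw [h2]; exact ht₁N.symm
          · have ht₁N : t₁ ∈ N := hTN t₁ ht₁ h1
            have ht₂N : t₂ ∈ N := hTN t₂ ht₂ h2
            have hEmem : s(t₁, t₂) ∈ E := hfree t₁ ht₁N t₂ ht₂N hne
            obtain ⟨a, b, haX, hbX, hab, habe, u', hu'S, hfu', hadj⟩ := hreal _ hEmem
            rw [Sym2.eq_iff] at habe
            have hu'x : ∀ x, f u' = x → x ≠ u → u' ∈ B x := by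
              intro x hx hxu
              rw [hBx x hxu]
              exact Set.mem_insert_of_mem _ ⟨hu'S, hx⟩
            rcases habe with ⟨ha, hb⟩ | ⟨ha, hb⟩
            · exact ⟨u', hu'x t₁ (hfu'.trans ha.symm) h1,
                t₂, by rw [hBx t₂ h2]; exact Set.mem_insert _ _, hb.symm ▸ hadj⟩
            · exact ⟨t₁, by rw [hBx t₁ h1]; exact Set.mem_insert _ _,
                u', hu'x t₂ (hfu'.trans hb.symm) h2, (ha.symm ▸ hadj).symm⟩
      set ψ : Fin (k+1) → Set V := fun i => B ((e i : T) : V) with hψ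
      have heX : ∀ i : Fin (k+1), ((e i : T) : V) = u ∨ ((e i : T) : V) ∈ X := by
        intro i
        rcases (e i).2 with h | h
        · exact Or.inl h
        · exact Or.inr (hNX _ h)
      have hmin : IsShallowMinorAtDepth G 1 (⊤ : SimpleGraph (Fin (k+1))) := by
        refine ⟨ψ, fun i => hBne _, ?_, fun i => hBrad _, ?_⟩
        · intro i j hij
          have hne : ((e i : T) : V) ≠ ((e j : T) : V) :=
            fun h => hij (e.injective (Subtype.ext h))
          exact hBdisj _ _ (heX i) (heX j) hne
        · intro i j hij
          have hne : ((e i : T) : V) ≠ ((e j : T) : V) :=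
            fun h => hij (e.injective (Subtype.ext h))
          constructor
          · intro _
            exact hconn _ _ (e i).2 (e j).2 hne
          · intro _
            exact hij
      have hd := density_le_grad G (⊤ : SimpleGraph (Fin (k+1))) (Nat.succ_pos k) hmin
      have hEcard : ((⊤ : SimpleGraph (Fin (k+1))).edgeSet.ncard : ℝ) = (k+1) * k / 2 := by
        have h1 : (⊤ : SimpleGraph (Fin (k+1))).edgeSet.ncard
            = (⊤ : SimpleGraph (Fin (k+1))).edgeFinset.card := by
          rw [Set.ncard_eq_toFinset_card']; exact congrArg Finset.card (by ext; simp)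
        rw [h1, SimpleGraph.card_edgeFinset_top_eq_card_choose_two]
        rw [Fintype.card_fin, Nat.cast_choose_two]
        push_cast
        ring
      rw [hEcard] at hd
      push_cast at hd
      have hkpos : (0:ℝ) < (k:ℝ) + 1 := by positivity
      rw [div_le_iff₀ hkpos] at hd
      nlinarith [hd, hudeg, hkpos]

/-- In a finite bipartite graph with parts `X` and `Y`, the number of vertices of `Y`
of degree greater than `2∇₁(G)` is at most `2∇₁(G)·|X|`. -/
theorem bipartite_few_high_degree_vertices
    {V : Type*} [Fintype V] (G : SimpleGraph V) (X Y : Set V)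
    (hunion : X ∪ Y = Set.univ) (hdisj : Disjoint X Y)
    (hbip : ∀ u v, G.Adj u v → (u ∈ X ∧ v ∈ Y) ∨ (u ∈ Y ∧ v ∈ X)) :
    (({u ∈ Y | 2 * grad G 1 < ((G.neighborSet u).ncard : ℝ)}.ncard : ℝ)) ≤
      2 * grad G 1 * (X.ncard : ℝ) := by
  classical
  set D : Set V := {u ∈ Y | 2 * grad G 1 < ((G.neighborSet u).ncard : ℝ)} with hD
  have hDfin : D.Finite := Set.toFinite D
  set DF : Finset V := hDfin.toFinset with hDF
  have hDcard : D.ncard = DF.card := Set.ncard_eq_toFinset_card D hDfin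
  have hDmem : ∀ u, u ∈ DF ↔ (u ∈ Y ∧ 2 * grad G 1 < ((G.neighborSet u).ncard : ℝ)) := by
    intro u
    rw [hDF, Set.Finite.mem_toFinset]
    rfl
  -- neighbors of elements of Y are in X
  have hNX : ∀ u, u ∈ Y → ∀ x ∈ G.neighborSet u, x ∈ X := by
    intro u huY x hx
    rcases hbip u x hx with ⟨h1, _⟩ | ⟨_, h2⟩
    · exact absurd h1 (fun h => Set.disjoint_left.mp hdisj h huY)
    · exact h2
  rcases Set.eq_empty_or_nonempty X with hX | hX
  · -- X empty: D must be empty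
    have hDe : D = ∅ := by
      rw [Set.eq_empty_iff_forall_notMem]
      rintro u ⟨huY, hdeg⟩
      have hr0 : 0 ≤ grad G 1 := grad_nonneg' G 1 u
      have hk : (G.neighborSet u).ncard ≠ 0 := by
        intro h0
        rw [h0] at hdeg
        simp at hdeg
        linarith
      obtain ⟨x, hx⟩ := (Set.nonempty_of_ncard_ne_zero hk : (G.neighborSet u).Nonempty)
      have := hNX u huY x hx
      rw [hX] at this
      exact this
    rw [hDe]
    have : (X.ncard : ℝ) = 0 := by rw [hX]; simp
    simp [this]
  · -- X nonempty
    obtain ⟨f, E, hf, hcard, hreal⟩ := greedy G X Y hdisj hbip DF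
      (fun u hu => (hDmem u).mp hu)
    have hr0 : 0 ≤ grad G 1 := grad_nonneg' G 1 hX.choose
    set m : ℕ := X.ncard with hm
    have hm0 : 0 < m := (Set.ncard_pos (Set.toFinite X)).mpr hX
    have hnc : Nat.card ↥X = m := Nat.card_coe_set_eq X
    let e : Fin m ≃ ↥X := (finCongr hnc.symm).trans (Finite.equivFin ↥X).symm
    set B : V → Set V := fun x => insert x {v | v ∈ DF ∧ f v = x} with hB
    have hfX : ∀ v ∈ DF, f v ∈ X := by
      intro v hv
      have hvY : v ∈ Y := ((hDmem v).mp hv).1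
      rcases hbip v (f v) (hf v hv) with ⟨h1, _⟩ | ⟨_, h2⟩
      · exact absurd h1 (fun h => Set.disjoint_left.mp hdisj h hvY)
      · exact h2
    have hBdisj : ∀ x y : V, x ∈ X → y ∈ X → x ≠ y → Disjoint (B x) (B y) := by
      intro x y hxX hyX hxy
      rw [Set.disjoint_left]
      intro v hvx hvy
      rcases hvx with hvx | ⟨hvS, hvf⟩
      · rcases hvy with hvy | ⟨hvS', hvf'⟩
        · exact hxy (hvx.symm.trans hvy)
        · exact Set.disjoint_left.mp hdisj (hvx.symm ▸ hxX) ((hDmem v).mp hvS').1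
      · rcases hvy with hvy | ⟨hvS', hvf'⟩
        · exact Set.disjoint_left.mp hdisj (hvy.symm ▸ hyX) ((hDmem v).mp hvS).1
        · exact hxy (hvf.symm.trans hvf')
    set ψ : Fin m → Set V := fun i => B ((e i : ↥X) : V) with hψ
    let H : SimpleGraph (Fin m) :=
      { Adj := fun i j => i ≠ j ∧ ∃ v₁ ∈ ψ i, ∃ v₂ ∈ ψ j, G.Adj v₁ v₂
        symm := ⟨by
          rintro i j ⟨hij, v₁, h₁, v₂, h₂, hadj⟩
          exact ⟨hij.symm, v₂, h₂, v₁, h₁, hadj.symm⟩⟩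
        loopless := ⟨fun i h => h.1 rfl⟩ }
    have hmin : IsShallowMinorAtDepth G 1 H := by
      refine ⟨ψ, fun i => ⟨_, Set.mem_insert _ _⟩, ?_, ?_, ?_⟩
      · intro i j hij
        have hne : ((e i : ↥X) : V) ≠ ((e j : ↥X) : V) :=
          fun h => hij (e.injective (Subtype.ext h))
        exact hBdisj _ _ (e i).2 (e j).2 hne
      · intro i
        refine ⟨⟨((e i : ↥X) : V), Set.mem_insert _ _⟩, ?_⟩
        rintro ⟨w, hw⟩
        rcases hw with hw | ⟨hwS, hwf⟩
        · exact ⟨SimpleGraph.Walk.nil.copy rfl (Subtype.ext hw.symm), by simp⟩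
        · have hadj : G.Adj (((e i : ↥X) : V)) w := by
            have := hf w hwS
            rw [hwf] at this
            exact this.symm
          exact ⟨SimpleGraph.Walk.cons (induce_adj_of hadj) SimpleGraph.Walk.nil, by simp⟩
      · intro i j hij
        exact ⟨And.right, fun h => ⟨hij, h⟩⟩
    have hd := density_le_grad G H hm0 hmin
    -- injection from E into edge set of H
    let g : V → Fin m := fun v =>
      if h : v ∈ X then e.symm ⟨v, h⟩ else e.symm ⟨hX.choose, hX.choose_spec⟩
    have hg : ∀ a ∈ X, ∀ b ∈ X, g a = g b → a = b := by
      intro a ha b hb hgab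
      simp only [g, dif_pos ha, dif_pos hb] at hgab
      exact congrArg Subtype.val (e.symm.injective hgab)
    have hge : ∀ a (h : a ∈ X), ((e (g a) : ↥X) : V) = a := by
      intro a h
      simp only [g, dif_pos h, Equiv.apply_symm_apply]
    have himg : ∀ e' ∈ (E : Set (Sym2 V)), Sym2.map g e' ∈ H.edgeSet := by
      intro e' he'
      obtain ⟨a, b, haX, hbX, hab, habe, u', hu'S, hfu', hadj⟩ := hreal e' he'
      rw [habe, Sym2.map_pair_eq, SimpleGraph.mem_edgeSet]
      refine ⟨fun h => hab (hg a haX b hbX (by simpa using congrArg id h)), ?_⟩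
      refine ⟨u', ?_, b, ?_, hadj⟩
      · show u' ∈ B ((e (g a) : ↥X) : V)
        rw [hge a haX]
        exact Set.mem_insert_of_mem _ ⟨hu'S, hfu'⟩
      · show b ∈ B ((e (g b) : ↥X) : V)
        rw [hge b hbX]
        exact Set.mem_insert _ _
    have hinj : Set.InjOn (Sym2.map g) (E : Set (Sym2 V)) := by
      intro e₁ he₁ e₂ he₂ heq
      obtain ⟨a₁, b₁, h1X, h2X, hne1, hE1, -⟩ := hreal e₁ he₁
      obtain ⟨a₂, b₂, h3X, h4X, hne2, hE2, -⟩ := hreal e₂ he₂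
      rw [hE1, hE2, Sym2.map_pair_eq, Sym2.map_pair_eq, Sym2.eq_iff] at heq
      rw [hE1, hE2]
      rcases heq with ⟨ha, hb⟩ | ⟨ha, hb⟩
      · rw [hg a₁ h1X a₂ h3X ha, hg b₁ h2X b₂ h4X hb]
      · rw [hg a₁ h1X b₂ h4X ha, hg b₁ h2X a₂ h3X hb, Sym2.eq_swap]
    have h5 : (DF.card : ℕ) ≤ H.edgeSet.ncard := by
      calc DF.card = E.card := hcard.symm
        _ = (E : Set (Sym2 V)).ncard := (Set.ncard_coe_finset E).symm
        _ = ((Sym2.map g) '' (E : Set (Sym2 V))).ncard :=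
            (Set.ncard_image_of_injOn hinj).symm
        _ ≤ H.edgeSet.ncard := Set.ncard_le_ncard
            (by rintro _ ⟨e', he', rfl⟩; exact himg e' he') (Set.toFinite _)
    -- finish
    rw [hDcard]
    have hmR : (0:ℝ) < (m:ℝ) := by exact_mod_cast hm0
    rw [div_le_iff₀ hmR] at hd
    have : (DF.card : ℝ) ≤ (H.edgeSet.ncard : ℝ) := by exact_mod_cast h5
    nlinarith [hd, this, hr0, hmR]
end

section
/- Let G be a finite simple bipartite graph whose vertex set is partitioned into parts X and Y (every edge of G has one endpoint in X and one endpoint in Y). Then the number of distinct nonempty subsets X' ⊆ X such that X' = N(u) for some u ∈ Y is at most (4^{∇₁(G)} + 2∇₁(G))·|X|. -/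
namespace AuxNbhd

open SimpleGraph

lemma grad_bddAbove {V : Type*} [Fintype V] (G : SimpleGraph V) (d : ℕ) :
    BddAbove { q : ℝ | ∃ (n : ℕ) (H : SimpleGraph (Fin n)), 0 < n ∧
      IsShallowMinorAtDepth G d H ∧ q = (H.edgeSet.ncard : ℝ) / (n : ℝ) } := by
  classical
  refine ⟨((Fintype.card V : ℝ))^2, ?_⟩
  rintro q ⟨n, H, hn, ⟨ψ, h1, h2, _, _⟩, rfl⟩
  -- n ≤ card V
  have hinj : Function.Injective (fun i : Fin n => (h1 i).choose) := by
    intro i j hij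
    by_contra hne
    have hd := h2 i j hne
    exact (hd.ne_of_mem (h1 i).choose_spec (h1 j).choose_spec) hij
  have hnV : n ≤ Fintype.card V := by
    simpa using Fintype.card_le_of_injective _ hinj
  -- edges ≤ n^2
  have he1 : H.edgeSet.ncard ≤ Nat.card (Sym2 (Fin n)) := by
    rw [← Nat.card_coe_set_eq]
    exact Nat.card_le_card_of_injective (fun e => (e : Sym2 (Fin n))) Subtype.coe_injective
  have he2 : Nat.card (Sym2 (Fin n)) ≤ n * n := by
    have := Nat.card_le_card_of_surjective (fun p : Fin n × Fin n => Sym2.mk p.1 p.2)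
      (fun z => Sym2.ind (fun a b => ⟨(a,b), rfl⟩) z)
    simpa [Nat.card_eq_fintype_card] using this
  have he : (H.edgeSet.ncard : ℝ) ≤ (n : ℝ) * n := by
    exact_mod_cast he1.trans he2
  have hn1 : (1 : ℝ) ≤ n := by exact_mod_cast hn
  have hnpos : (0 : ℝ) < n := by exact_mod_cast hn
  rw [div_le_iff₀ hnpos]
  have hcn : (n:ℝ) ≤ Fintype.card V := by exact_mod_cast hnV
  have h3 : (n:ℝ)*n ≤ (Fintype.card V:ℝ) * ((Fintype.card V:ℝ) * n) := by
    have h4 : (n:ℝ)*n ≤ (Fintype.card V:ℝ) * n := by nlinarith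
    have h5 : (Fintype.card V:ℝ) * n ≤ (Fintype.card V:ℝ) * ((Fintype.card V:ℝ) * n) := by
      nlinarith
    linarith
  calc (H.edgeSet.ncard : ℝ) ≤ (n : ℝ) * n := he
    _ ≤ (Fintype.card V:ℝ) * ((Fintype.card V:ℝ) * n) := h3
    _ = (Fintype.card V : ℝ)^2 * n := by ring


lemma le_grad {V : Type*} [Fintype V] (G : SimpleGraph V) (d n : ℕ)
    (H : SimpleGraph (Fin n)) (hn : 0 < n) (hm : IsShallowMinorAtDepth G d H) :
    (H.edgeSet.ncard : ℝ) / n ≤ grad G d :=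
  le_csSup (grad_bddAbove G d) ⟨n, H, hn, hm, rfl⟩

lemma grad_nonneg {V : Type*} [Fintype V] [Nonempty V] (G : SimpleGraph V) (d : ℕ) :
    0 ≤ grad G d := by
  classical
  obtain ⟨v⟩ := ‹Nonempty V›
  have hm : IsShallowMinorAtDepth G d (⊥ : SimpleGraph (Fin 1)) := by
    refine ⟨fun _ => {v}, fun _ => ⟨v, rfl⟩, fun w₁ w₂ h => absurd (Subsingleton.elim w₁ w₂) h,
      ?_, fun w₁ w₂ h => absurd (Subsingleton.elim w₁ w₂) h⟩
    intro w
    refine ⟨⟨v, rfl⟩, fun u => ?_⟩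
    haveI : Unique ↑({v} : Set V) := Set.uniqueSingleton v
    have hu : u = ⟨v, rfl⟩ := Subsingleton.elim _ _
    subst hu
    exact ⟨SimpleGraph.Walk.nil, by simp⟩
  have := le_grad G d 1 ⊥ one_pos hm
  simpa using this

lemma edge_bound {V W : Type*} [Fintype V] [Fintype W] [Nonempty W] (G : SimpleGraph V)
    (d : ℕ) (H : SimpleGraph W) (hm : IsShallowMinorAtDepth G d H) :
    (H.edgeSet.ncard : ℝ) ≤ grad G d * Fintype.card W := by
  classical
  set n := Fintype.card W with hn
  have hnpos : 0 < n := Fintype.card_pos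
  let e : W ≃ Fin n := Fintype.equivFin W
  let H' : SimpleGraph (Fin n) := H.comap e.symm
  have hm' : IsShallowMinorAtDepth G d H' := by
    obtain ⟨ψ, h1, h2, h3, h4⟩ := hm
    exact ⟨ψ ∘ e.symm, fun w => h1 _, fun w₁ w₂ h => h2 _ _ (e.symm.injective.ne h),
      fun w => h3 _, fun w₁ w₂ h => h4 _ _ (e.symm.injective.ne h)⟩
  have hiso : H ≃g H' := ⟨e, by intro a b; simp [H', SimpleGraph.comap]⟩
  have hcard : H.edgeSet.ncard = H'.edgeSet.ncard := by
    rw [← Nat.card_coe_set_eq, ← Nat.card_coe_set_eq]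
    exact Nat.card_congr hiso.mapEdgeSet
  have := le_grad G d n H' hnpos hm'
  rw [div_le_iff₀ (by exact_mod_cast hnpos)] at this
  rw [hcard]
  exact this

lemma IsShallowMinorAtDepth.induce {V W : Type*} {G : SimpleGraph V} {d : ℕ}
    {H : SimpleGraph W} (S : Set W) (h : IsShallowMinorAtDepth G d H) :
    IsShallowMinorAtDepth G d (H.induce S) := by
  obtain ⟨ψ, h1, h2, h3, h4⟩ := h
  exact ⟨fun z => ψ ↑z, fun z => h1 _, fun z₁ z₂ h => h2 _ _ (Subtype.coe_injective.ne h),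
    fun z => h3 _, fun z₁ z₂ h => h4 _ _ (Subtype.coe_injective.ne h)⟩


def Bset {V : Type*} (X : Set V) (s : V → Option ↥X) (x : ↥X) : Set V :=
  insert (↑x) {u | s u = some x}

def Mgraph {V : Type*} (G : SimpleGraph V) (X : Set V) (s : V → Option ↥X) :
    SimpleGraph ↥X where
  Adj x y := x ≠ y ∧ ∃ v₁ ∈ Bset X s x, ∃ v₂ ∈ Bset X s y, G.Adj v₁ v₂
  symm := by
    constructor
    rintro x y ⟨h, v₁, h₁, v₂, h₂, ha⟩
    exact ⟨h.symm, v₂, h₂, v₁, h₁, ha.symm⟩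
  loopless := by constructor; rintro x ⟨h, -⟩; exact h rfl

lemma minor_Mgraph {V : Type*} (G : SimpleGraph V) (X : Set V) (s : V → Option ↥X)
    (hs : ∀ u x, s u = some x → u ∉ X ∧ G.Adj u ↑x) :
    IsShallowMinorAtDepth G 1 (Mgraph G X s) := by
  refine ⟨Bset X s, fun x => ⟨↑x, Set.mem_insert _ _⟩, ?_, ?_, fun x y h => Iff.rfl.trans ?_⟩
  · intro x y hxy
    rw [Set.disjoint_left]
    rintro v (rfl | hv) hv'
    · rcases hv' with h' | h'
      · exact hxy (Subtype.ext h')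
      · exact (hs _ _ h').1 x.2
    · rcases hv' with h' | h'
      · exact (hs _ _ hv).1 (h' ▸ y.2)
      · exact hxy (Option.some_injective _ (hv.symm.trans h'))
  · intro x
    refine ⟨⟨↑x, Set.mem_insert _ _⟩, fun u => ?_⟩
    rcases u with ⟨v, hv | hv⟩
    · subst hv
      exact ⟨SimpleGraph.Walk.nil, by simp⟩
    · have hadj : (SimpleGraph.induce (Bset X s x) G).Adj ⟨↑x, Set.mem_insert _ _⟩ ⟨v, Or.inr hv⟩ :=
        ((hs _ _ hv).2).symm
      exact ⟨hadj.toWalk, by simp⟩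
  · constructor
    · rintro ⟨-, h⟩; exact h
    · intro h2; exact ⟨h, h2⟩

lemma clique_count {W : Type*} [Fintype W] [DecidableEq W] (M : SimpleGraph W)
    [DecidableRel M.Adj] (k : ℕ) [DecidablePred fun A : Finset W => A.Nonempty ∧ M.IsClique (↑A : Set W)] :
    ∀ (n : ℕ) (T : Finset W), T.card = n →
      (∀ S : Finset W, S ⊆ T → S.Nonempty → ∃ x ∈ S, (S.filter (M.Adj x)).card ≤ k) →
      (T.powerset.filter (fun A : Finset W => A.Nonempty ∧ M.IsClique (↑A : Set W))).card
        ≤ 2 ^ k * T.card := by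
  classical
  intro n
  induction n using Nat.strong_induction_on with
  | _ n ih =>
    intro T hTn hdeg
    rcases T.eq_empty_or_nonempty with rfl | hT
    · rw [Finset.powerset_empty, Finset.filter_singleton]
      simp
    obtain ⟨x, hxT, hxdeg⟩ := hdeg T le_rfl hT
    set T' := T.erase x with hT'
    have hT'card : T'.card = T.card - 1 := Finset.card_erase_of_mem hxT
    have hT'lt : T'.card < n := by
      rw [hT'card, ← hTn]
      exact Nat.sub_lt (Finset.card_pos.mpr hT) one_pos
    set P := T.powerset.filter (fun A : Finset W => A.Nonempty ∧ M.IsClique (↑A : Set W)) with hP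
    have hPmem : ∀ A, A ∈ P ↔ A ⊆ T ∧ A.Nonempty ∧ M.IsClique (↑A : Set W) := by
      intro A
      simp [hP, Finset.mem_filter, Finset.mem_powerset]
    have hsplit : (P.filter (fun A => x ∈ A)).card + (P.filter (fun A => x ∉ A)).card = P.card :=
      Finset.card_filter_add_card_filter_not _
    have h1 : (P.filter (fun A => x ∉ A)).card ≤ 2 ^ k * T'.card := by
      have hsub : P.filter (fun A => x ∉ A) ⊆
          T'.powerset.filter (fun A : Finset W => A.Nonempty ∧ M.IsClique (↑A : Set W)) := by
        intro A hA
        obtain ⟨hA1, hA2⟩ := Finset.mem_filter.mp hA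
        obtain ⟨hsubT, hne, hcl⟩ := (hPmem A).mp hA1
        refine Finset.mem_filter.mpr ⟨Finset.mem_powerset.mpr ?_, hne, hcl⟩
        intro a ha
        exact Finset.mem_erase.mpr ⟨fun h => hA2 (h ▸ ha), hsubT ha⟩
      exact (Finset.card_le_card hsub).trans (ih _ hT'lt T' rfl
        (fun S hS hSne => hdeg S (hS.trans (Finset.erase_subset _ _)) hSne))
    have h2 : (P.filter (fun A => x ∈ A)).card ≤ 2 ^ k := by
      have hmaps : ∀ A ∈ P.filter (fun A => x ∈ A),
          A.erase x ∈ (T.filter (M.Adj x)).powerset := by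
        intro A hA
        obtain ⟨hA1, hxA⟩ := Finset.mem_filter.mp hA
        obtain ⟨hsubT, hne, hcl⟩ := (hPmem A).mp hA1
        refine Finset.mem_powerset.mpr ?_
        intro a ha
        obtain ⟨hax, haA⟩ := Finset.mem_erase.mp ha
        refine Finset.mem_filter.mpr ⟨hsubT haA, ?_⟩
        exact hcl (Finset.mem_coe.mpr hxA) (Finset.mem_coe.mpr haA) (Ne.symm hax)
      have hinj : Set.InjOn (fun A : Finset W => A.erase x) ↑(P.filter (fun A => x ∈ A)) := by
        intro A hA B hB hAB
        have hxA : x ∈ A := (Finset.mem_filter.mp (Finset.mem_coe.mp hA)).2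
        have hxB : x ∈ B := (Finset.mem_filter.mp (Finset.mem_coe.mp hB)).2
        rw [← Finset.insert_erase hxA, ← Finset.insert_erase hxB]
        exact congrArg (insert x) hAB
      have := Finset.card_le_card_of_injOn _ hmaps hinj
      refine this.trans ?_
      rw [Finset.card_powerset]
      exact Nat.pow_le_pow_right (by norm_num) hxdeg
    have hTpos : 1 ≤ T.card := Finset.card_pos.mpr hT
    calc P.card = (P.filter (fun A => x ∈ A)).card + (P.filter (fun A => x ∉ A)).card := hsplit.symm
      _ ≤ 2 ^ k + 2 ^ k * T'.card := by omega
      _ = 2 ^ k * (T'.card + 1) := by ring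
      _ ≤ 2 ^ k * T.card := Nat.mul_le_mul_left _ (by omega)

lemma exists_low_deg {W : Type*} [Fintype W] [DecidableEq W] (M : SimpleGraph W)
    [DecidableRel M.Adj] (D : ℝ) (k : ℕ)
    (hk : 2 * D < (k : ℝ) + 1)
    (hdens : ∀ S : Finset W, S.Nonempty →
      (((M.induce (↑S : Set W)).edgeSet.ncard : ℝ)) ≤ D * S.card) :
    ∀ S : Finset W, S.Nonempty → ∃ x ∈ S, (S.filter (M.Adj x)).card ≤ k := by
  classical
  intro S hS
  by_contra hcon
  push_neg at hcon
  set H := M.induce (↑S : Set W) with hH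
  have hcardS : Fintype.card ↥(↑S : Set W) = S.card := by
    rw [← Nat.card_eq_fintype_card, Nat.card_coe_set_eq, Set.ncard_coe_finset]
  have hdeg : ∀ z : ↥(↑S : Set W), H.degree z = (S.filter (fun y => M.Adj ↑z y)).card := by
    intro z
    rw [← SimpleGraph.card_neighborFinset_eq_degree, SimpleGraph.neighborFinset_eq_filter]
    refine Finset.card_bij (fun b _ => (b : W)) ?_ ?_ ?_
    · intro b hb
      refine Finset.mem_filter.mpr ⟨b.2, (Finset.mem_filter.mp hb).2⟩
    · intro a ha b hb hab
      exact Subtype.ext hab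
    · intro y hy
      obtain ⟨hyS, hyadj⟩ := Finset.mem_filter.mp hy
      exact ⟨⟨y, hyS⟩, Finset.mem_filter.mpr ⟨Finset.mem_univ _, hyadj⟩, rfl⟩
  have hsum : ∑ z : ↥(↑S : Set W), H.degree z = 2 * H.edgeFinset.card :=
    SimpleGraph.sum_degrees_eq_twice_card_edges H
  have hlow : (k + 1) * S.card ≤ ∑ z : ↥(↑S : Set W), H.degree z := by
    calc (k + 1) * S.card = (Finset.univ : Finset ↥(↑S : Set W)).card * (k + 1) := by
          rw [Finset.card_univ, hcardS]; ring
      _ ≤ ∑ z : ↥(↑S : Set W), H.degree z := by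
          rw [← smul_eq_mul]
          refine Finset.card_nsmul_le_sum _ _ _ ?_
          intro z _
          rw [hdeg z]
          exact hcon ↑z z.2
  have hef : H.edgeFinset.card = H.edgeSet.ncard := by
    rw [Set.ncard_eq_toFinset_card']
    simp [SimpleGraph.edgeFinset]
  have hub : (H.edgeSet.ncard : ℝ) ≤ D * S.card := hdens S hS
  have hSpos : (0 : ℝ) < S.card := by
    exact_mod_cast Finset.card_pos.mpr hS
  have hreal : ((k : ℝ) + 1) * S.card ≤ 2 * (H.edgeSet.ncard : ℝ) := by
    have := hlow.trans_eq hsum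
    rw [hef] at this
    exact_mod_cast this
  nlinarith

end AuxNbhd

/-- In a finite bipartite graph with parts `X` and `Y`, the number of distinct nonempty
subsets `X' ⊆ X` that are the neighborhood of some vertex of `Y` is at most
`(4^{∇₁(G)} + 2∇₁(G))·|X|`. -/
theorem bipartite_few_neighborhood_subsets
    {V : Type*} [Fintype V] (G : SimpleGraph V) (X Y : Set V)
    (hunion : X ∪ Y = Set.univ) (hdisj : Disjoint X Y)
    (hbip : ∀ u v, G.Adj u v → (u ∈ X ∧ v ∈ Y) ∨ (u ∈ Y ∧ v ∈ X)) :
    (({X' : Set V | X'.Nonempty ∧ X' ⊆ X ∧ ∃ u ∈ Y, X' = G.neighborSet u}.ncard : ℝ)) ≤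
      ((4 : ℝ) ^ (grad G 1) + 2 * grad G 1) * (X.ncard : ℝ) := by
  classical
  set D := grad G 1 with hD
  set 𝒩 := {X' : Set V | X'.Nonempty ∧ X' ⊆ X ∧ ∃ u ∈ Y, X' = G.neighborSet u} with h𝒩
  by_cases hX : X.Nonempty
  swap
  · have hXe : X = ∅ := Set.not_nonempty_iff_eq_empty.mp hX
    have h0 : 𝒩 = ∅ := by
      ext A
      simp only [h𝒩, Set.mem_setOf_eq, Set.mem_empty_iff_false, iff_false, not_and]
      rintro ⟨a, ha⟩ hsub
      rw [hXe] at hsub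
      exact absurd (hsub ha) (Set.notMem_empty a)
    rw [h0, hXe]
    simp
  haveI : Nonempty V := ⟨hX.choose⟩
  haveI : Nonempty ↥X := hX.to_subtype
  have hD0 : 0 ≤ D := AuxNbhd.grad_nonneg G 1
  set k := ⌊2 * D⌋₊ with hk
  have hNsub : ∀ u ∈ Y, G.neighborSet u ⊆ X := by
    intro u hu v hv
    rcases hbip u v hv with ⟨h1, -⟩ | ⟨-, h2⟩
    · exact absurd hu (Set.disjoint_left.mp hdisj h1)
    · exact h2
  -- representatives
  set f : Set V → V := fun A => if h : ∃ u, u ∈ Y ∧ G.neighborSet u = A then h.choose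
    else Classical.arbitrary V with hf
  have hfspec : ∀ A ∈ 𝒩, f A ∈ Y ∧ G.neighborSet (f A) = A := by
    intro A hA
    obtain ⟨-, -, u, hu, hAu⟩ := hA
    have h : ∃ u, u ∈ Y ∧ G.neighborSet u = A := ⟨u, hu, hAu.symm⟩
    rw [hf]
    simp only [dif_pos h]
    exact h.choose_spec
  have h𝒩fin : 𝒩.Finite := Set.toFinite _
  set R : Finset V := h𝒩fin.toFinset.image f with hR
  have hmemR : ∀ u ∈ R, u ∈ Y ∧ G.neighborSet u ∈ 𝒩 := by
    intro u hu
    obtain ⟨A, hA, rfl⟩ := Finset.mem_image.mp hu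
    rw [Set.Finite.mem_toFinset] at hA
    obtain ⟨h1, h2⟩ := hfspec A hA
    exact ⟨h1, h2.symm ▸ hA⟩
  have hRcard : R.card = 𝒩.ncard := by
    rw [Set.ncard_eq_toFinset_card _ h𝒩fin, hR]
    refine Finset.card_image_of_injOn ?_
    intro A hA B hB hAB
    rw [Set.Finite.coe_toFinset] at hA hB
    rw [← (hfspec A hA).2, ← (hfspec B hB).2, hAB]
  have hNinj : ∀ u ∈ R, ∀ u' ∈ R, G.neighborSet u = G.neighborSet u' → u = u' := by
    intro u hu u' hu'
    obtain ⟨A, hA, rfl⟩ := Finset.mem_image.mp hu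
    obtain ⟨B, hB, rfl⟩ := Finset.mem_image.mp hu'
    rw [Set.Finite.mem_toFinset] at hA hB
    intro h
    rw [(hfspec A hA).2, (hfspec B hB).2] at h
    rw [h]
  -- maximal valid assignment
  set Valid : (V → Option ↥X) → Prop := fun s =>
    (∀ u x, s u = some x → u ∈ R ∧ G.Adj u ↑x) ∧
    (Finset.univ.filter (fun u => s u ≠ none)).card ≤
      (AuxNbhd.Mgraph G X s).edgeSet.ncard with hValid
  have hValid0 : Valid (fun _ => none) := by
    constructor
    · intro u x h
      simp at h
    · simp
  obtain ⟨s, hsmem, hsmax⟩ := Finset.exists_max_image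
    (Finset.univ.filter Valid) (fun s => (Finset.univ.filter (fun u => s u ≠ none)).card)
    ⟨fun _ => none, Finset.mem_filter.mpr ⟨Finset.mem_univ _, hValid0⟩⟩
  have hsValid : Valid s := (Finset.mem_filter.mp hsmem).2
  set M := AuxNbhd.Mgraph G X s with hM
  have hminor : IsShallowMinorAtDepth G 1 M := by
    refine AuxNbhd.minor_Mgraph G X s ?_
    intro u x h
    obtain ⟨huR, hadj⟩ := hsValid.1 u x h
    exact ⟨fun hXu => Set.disjoint_left.mp hdisj hXu (hmemR u huR).1, hadj⟩
  have hXcard : (Fintype.card ↥X : ℝ) = (X.ncard : ℝ) := by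
    rw [← Nat.card_eq_fintype_card, Nat.card_coe_set_eq]
  have hdens : ∀ S : Finset ↥X, S.Nonempty →
      ((M.induce (↑S : Set ↥X)).edgeSet.ncard : ℝ) ≤ D * S.card := by
    intro S hS
    haveI : Nonempty ↥(↑S : Set ↥X) := by
      obtain ⟨z, hz⟩ := hS
      exact ⟨⟨z, hz⟩⟩
    have h1 := AuxNbhd.edge_bound G 1 (M.induce (↑S : Set ↥X))
      (AuxNbhd.IsShallowMinorAtDepth.induce _ hminor)
    have h2 : (Fintype.card ↥(↑S : Set ↥X) : ℝ) = (S.card : ℝ) := by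
      rw [← Nat.card_eq_fintype_card, Nat.card_coe_set_eq, Set.ncard_coe_finset]
    rw [h2] at h1
    exact h1
  have hk1 : 2 * D < (k : ℝ) + 1 := by
    have := Nat.lt_floor_add_one (2 * D)
    exact_mod_cast this
  have hlowdeg := AuxNbhd.exists_low_deg M D k hk1 hdens
  have hclique := AuxNbhd.clique_count M k (Finset.univ.card) Finset.univ rfl
    (fun S _ hS => hlowdeg S hS)
  -- bad vertices
  set badR := R.filter (fun u => s u = none) with hbadR
  set 𝒜 : V → Finset ↥X := fun u => Finset.univ.filter (fun z => (z : V) ∈ G.neighborSet u)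
    with h𝒜
  have hmem𝒜 : ∀ u (z : ↥X), z ∈ 𝒜 u ↔ (z : V) ∈ G.neighborSet u := by
    intro u z
    simp [h𝒜]
  have hcliqueBad : ∀ u ∈ badR, M.IsClique (↑(𝒜 u) : Set ↥X) := by
    intro u hu
    obtain ⟨huR, husnone⟩ := Finset.mem_filter.mp hu
    intro z hz z' hz' hne
    by_contra hnadj
    set s' := Function.update s u (some z) with hs'
    have hzN : (z : V) ∈ G.neighborSet u := (hmem𝒜 u z).mp (Finset.mem_coe.mp hz)
    have hz'N : (z' : V) ∈ G.neighborSet u := (hmem𝒜 u z').mp (Finset.mem_coe.mp hz')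
    have hs'V1 : ∀ w x, s' w = some x → w ∈ R ∧ G.Adj w ↑x := by
      intro w x hw
      by_cases hwu : w = u
      · subst hwu
        rw [hs', Function.update_self] at hw
        obtain rfl : z = x := Option.some_injective _ hw
        exact ⟨huR, hzN⟩
      · rw [hs', Function.update_of_ne hwu] at hw
        exact hsValid.1 w x hw
    have hdom' : Finset.univ.filter (fun w => s' w ≠ none)
        = insert u (Finset.univ.filter (fun w => s w ≠ none)) := by
      ext w
      by_cases hwu : w = u
      · subst hwu
        simp [hs', Function.update_self]
      · simp [hs', Function.update_of_ne hwu, hwu]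
    have hunotdom : u ∉ Finset.univ.filter (fun w => s w ≠ none) := by
      simp [husnone]
    have hBsub : ∀ x : ↥X, AuxNbhd.Bset X s x ⊆ AuxNbhd.Bset X s' x := by
      intro x v hv
      rcases Set.mem_insert_iff.mp hv with hv | hv
      · exact Set.mem_insert_iff.mpr (Or.inl hv)
      · have hvu : v ≠ u := by
          intro h
          have hv2 : s v = some x := hv
          rw [h, husnone] at hv2
          exact Option.some_ne_none x hv2.symm
        refine Set.mem_insert_iff.mpr (Or.inr ?_)
        show s' v = some x
        rw [hs', Function.update_of_ne hvu]
        exact hv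
    have hle : M ≤ AuxNbhd.Mgraph G X s' := by
      rintro a b ⟨hab, v₁, hv₁, v₂, hv₂, hadj⟩
      exact ⟨hab, v₁, hBsub a hv₁, v₂, hBsub b hv₂, hadj⟩
    have hnew : (AuxNbhd.Mgraph G X s').Adj z z' := by
      refine ⟨hne, u, Set.mem_insert_iff.mpr (Or.inr ?_), ↑z',
        Set.mem_insert_iff.mpr (Or.inl rfl), hz'N⟩
      show s' u = some z
      rw [hs', Function.update_self]
    have hnotmem : s(z, z') ∉ M.edgeSet := fun h => hnadj ((SimpleGraph.mem_edgeSet _).mp h)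
    have hcard' : M.edgeSet.ncard + 1 ≤ (AuxNbhd.Mgraph G X s').edgeSet.ncard := by
      have h1 : insert s(z, z') M.edgeSet ⊆ (AuxNbhd.Mgraph G X s').edgeSet := by
        rintro e he
        rcases Set.mem_insert_iff.mp he with rfl | he
        · exact (SimpleGraph.mem_edgeSet _).mpr hnew
        · exact SimpleGraph.edgeSet_mono hle he
      calc M.edgeSet.ncard + 1 = (insert s(z, z') M.edgeSet).ncard :=
            (Set.ncard_insert_of_notMem hnotmem (Set.toFinite _)).symm
        _ ≤ _ := Set.ncard_le_ncard h1 (Set.toFinite _)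
    have hValid' : Valid s' := by
      refine ⟨hs'V1, ?_⟩
      rw [hdom', Finset.card_insert_of_notMem hunotdom]
      exact (Nat.add_le_add_right hsValid.2 1).trans hcard'
    have hcontra := hsmax s' (Finset.mem_filter.mpr ⟨Finset.mem_univ _, hValid'⟩)
    rw [hdom', Finset.card_insert_of_notMem hunotdom] at hcontra
    omega
  -- counting
  have hbadinj : Set.InjOn 𝒜 ↑badR := by
    intro u hu u' hu' h
    have huR : u ∈ R := (Finset.mem_filter.mp (Finset.mem_coe.mp hu)).1
    have hu'R : u' ∈ R := (Finset.mem_filter.mp (Finset.mem_coe.mp hu')).1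
    refine hNinj u huR u' hu'R ?_
    ext x
    constructor
    · intro hx
      have hxX : x ∈ X := hNsub u (hmemR u huR).1 hx
      have hx𝒜 : (⟨x, hxX⟩ : ↥X) ∈ 𝒜 u := (hmem𝒜 _ _).mpr hx
      rw [h] at hx𝒜
      exact (hmem𝒜 _ _).mp hx𝒜
    · intro hx
      have hxX : x ∈ X := hNsub u' (hmemR u' hu'R).1 hx
      have hx𝒜 : (⟨x, hxX⟩ : ↥X) ∈ 𝒜 u' := (hmem𝒜 _ _).mpr hx
      rw [← h] at hx𝒜
      exact (hmem𝒜 _ _).mp hx𝒜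
  have hbadmaps : ∀ u ∈ badR, 𝒜 u ∈ (Finset.univ : Finset ↥X).powerset.filter
      (fun A : Finset ↥X => A.Nonempty ∧ M.IsClique (↑A : Set ↥X)) := by
    intro u hu
    have huR : u ∈ R := (Finset.mem_filter.mp hu).1
    refine Finset.mem_filter.mpr ⟨Finset.mem_powerset.mpr (Finset.subset_univ _), ?_,
      hcliqueBad u hu⟩
    obtain ⟨huY, hN𝒩⟩ := hmemR u huR
    obtain ⟨⟨x, hx⟩, -, -⟩ := hN𝒩
    exact ⟨⟨x, hNsub u huY hx⟩, (hmem𝒜 _ _).mpr hx⟩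
  have hXuniv : (Finset.univ : Finset ↥X).card = X.ncard := by
    rw [Finset.card_univ, ← Nat.card_eq_fintype_card, Nat.card_coe_set_eq]
  have hbadcard : badR.card ≤ 2 ^ k * X.ncard := by
    have h1 := Finset.card_le_card_of_injOn 𝒜 hbadmaps hbadinj
    rw [hXuniv] at hclique
    omega
  have hdomcard : ((Finset.univ.filter (fun u => s u ≠ none)).card : ℝ) ≤ D * X.ncard := by
    have h1 := hsValid.2
    have h2 := AuxNbhd.edge_bound G 1 M hminor
    rw [hXcard] at h2
    calc ((Finset.univ.filter (fun u => s u ≠ none)).card : ℝ) ≤ (M.edgeSet.ncard : ℝ) := by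
          exact_mod_cast h1
      _ ≤ D * X.ncard := h2
  have hdomR : R.filter (fun u => ¬ s u = none) = Finset.univ.filter (fun u => s u ≠ none) := by
    ext u
    simp only [Finset.mem_filter, Finset.mem_univ, true_and]
    constructor
    · exact fun h => h.2
    · intro h
      obtain ⟨x, hx⟩ := Option.ne_none_iff_exists'.mp h
      exact ⟨(hsValid.1 u x hx).1, h⟩
  have hsplitR : badR.card + (Finset.univ.filter (fun u => s u ≠ none)).card = R.card := by
    rw [← hdomR, hbadR]
    exact Finset.card_filter_add_card_filter_not _
  have h22 : (2 : ℝ) ^ (2 : ℝ) = 4 := by norm_num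
  have h40 : (4 : ℝ) ^ D = (2 : ℝ) ^ (2 * D) := by
    rw [Real.rpow_mul (by norm_num : (0 : ℝ) ≤ 2), h22]
  have h4D : ((2 : ℝ)) ^ (k : ℕ) ≤ (4 : ℝ) ^ D := by
    calc ((2 : ℝ)) ^ (k : ℕ) = (2 : ℝ) ^ ((k : ℕ) : ℝ) := (Real.rpow_natCast 2 k).symm
      _ ≤ (2 : ℝ) ^ (2 * D) :=
          Real.rpow_le_rpow_of_exponent_le (by norm_num) (Nat.floor_le (by positivity))
      _ = (4 : ℝ) ^ D := h40.symm
  have hXn0 : (0 : ℝ) ≤ (X.ncard : ℝ) := by positivity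
  have e1 : (𝒩.ncard : ℝ) = (badR.card : ℝ)
      + ((Finset.univ.filter (fun u => s u ≠ none)).card : ℝ) := by
    rw [← hRcard, ← hsplitR]
    push_cast
    ring
  have e2 : (badR.card : ℝ) ≤ (2 : ℝ) ^ (k : ℕ) * X.ncard := by exact_mod_cast hbadcard
  calc (𝒩.ncard : ℝ) = (badR.card : ℝ)
        + ((Finset.univ.filter (fun u => s u ≠ none)).card : ℝ) := e1
    _ ≤ (2 : ℝ) ^ (k : ℕ) * X.ncard + D * X.ncard := add_le_add e2 hdomcard
    _ ≤ (4 : ℝ) ^ D * X.ncard + (2 * D) * X.ncard :=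
        add_le_add (mul_le_mul_of_nonneg_right h4D hXn0)
          (mul_le_mul_of_nonneg_right (by linarith) hXn0)
    _ = ((4 : ℝ) ^ D + 2 * D) * X.ncard := by ring
end

section
/- Let G be a finite simple bipartite graph whose vertex set is partitioned into parts X and Y (every edge of G has one endpoint in X and one endpoint in Y), and let 𝓗 = (G∇1)_{≤|X|} be the set of shallow minors of G at depth 1 having at most |X| vertices. Then the number of vertices u ∈ Y whose degree in G is strictly greater than ω(𝓗) is at most 2∇₀(𝓗)·|X|. -/
/-- `ω((G∇d)_{≤ℓ})`: the supremum of clique sizes over shallow minors of `G` at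
depth `d` having at most `ℓ` vertices. -/
noncomputable def omegaMinors {V : Type*} (G : SimpleGraph V) (d ℓ : ℕ) : ℕ :=
  sSup { m : ℕ | ∃ (n : ℕ) (H : SimpleGraph (Fin n)), n ≤ ℓ ∧
    IsShallowMinorAtDepth G d H ∧ ∃ s : Finset (Fin n), H.IsNClique m s }

/-- `∇₀((G∇d)_{≤ℓ})`: the supremum of `|E(H)|/|V(H)|` over nonempty shallow minors of
`G` at depth `d` having at most `ℓ` vertices. -/
noncomputable def nabla0Minors {V : Type*} (G : SimpleGraph V) (d ℓ : ℕ) : ℝ :=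
  sSup { q : ℝ | ∃ (n : ℕ) (H : SimpleGraph (Fin n)), 0 < n ∧ n ≤ ℓ ∧
    IsShallowMinorAtDepth G d H ∧ q = (H.edgeSet.ncard : ℝ) / (n : ℝ) }

open SimpleGraph

section Aux

variable {V : Type*} (G : SimpleGraph V) (X : Set V)

/-- Auxiliary minor graph on `X`. -/
private def auxF (D : Finset V) (a : V → V) : SimpleGraph ↥X where
  Adj x y := x ≠ y ∧ ∃ u ∈ D, ((a u = ↑x ∧ G.Adj u ↑y) ∨ (a u = ↑y ∧ G.Adj u ↑x))
  symm := ⟨by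
    rintro x y ⟨hxy, u, hu, h⟩
    exact ⟨hxy.symm, u, hu, h.symm⟩⟩
  loopless := ⟨fun x h => h.1 rfl⟩

variable {G X} {Y : Set V}

private lemma auxF_minor
    (hdisj : Disjoint X Y)
    (hbip : ∀ u v, G.Adj u v → (u ∈ X ∧ v ∈ Y) ∨ (u ∈ Y ∧ v ∈ X))
    {D : Finset V} (hDY : ∀ u ∈ D, u ∈ Y) {a : V → V}
    (ha : ∀ u ∈ D, a u ∈ X ∧ G.Adj u (a u))
    {ℓ : ℕ} (e : Fin ℓ ≃ ↥X) :
    IsShallowMinorAtDepth G 1 ((auxF G X D a).comap e.toEmbedding) := by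
  have hXY : ∀ v, v ∈ X → v ∈ Y → False := fun v h1 h2 =>
    (Set.disjoint_left.mp hdisj h1) h2
  refine ⟨fun i => insert (↑(e i) : V) {u | u ∈ D ∧ a u = ↑(e i)}, ?_, ?_, ?_, ?_⟩
  · exact fun i => ⟨↑(e i), Set.mem_insert _ _⟩
  · intro i j hij
    rw [Set.disjoint_left]
    rintro v (rfl | ⟨hvD, hva⟩) hvj
    · rcases hvj with h | ⟨hvD, hva⟩
      · exact hij (e.injective (Subtype.val_injective h))
      · exact hXY _ (e i).2 (hDY _ hvD)
    · rcases hvj with h | ⟨_, hva'⟩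
      · exact hXY _ ((h ▸ (e j).2) : v ∈ X) (hDY _ hvD)
      · exact hij (e.injective (Subtype.val_injective (hva ▸ hva')))
  · intro i
    refine ⟨⟨↑(e i), Set.mem_insert _ _⟩, ?_⟩
    rintro ⟨v, hv⟩
    rcases hv with rfl | ⟨hvD, hva⟩
    · exact ⟨SimpleGraph.Walk.nil, by simp⟩
    · have hadj : (SimpleGraph.induce (insert (↑(e i) : V) {u | u ∈ D ∧ a u = ↑(e i)}) G).Adj
          ⟨↑(e i), Set.mem_insert _ _⟩ ⟨v, Set.mem_insert_iff.mpr (Or.inr ⟨hvD, hva⟩)⟩ := by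
        show G.Adj ↑(e i) v
        exact (hva ▸ (ha v hvD).2).symm
      exact ⟨SimpleGraph.Walk.cons hadj SimpleGraph.Walk.nil, by simp⟩
  · intro i j hij
    constructor
    · rintro ⟨hne, u, huD, (⟨hau, hadj⟩ | ⟨hau, hadj⟩)⟩
      · exact ⟨u, Set.mem_insert_iff.mpr (Or.inr ⟨huD, hau⟩), ↑(e j),
          Set.mem_insert _ _, hadj⟩
      · exact ⟨↑(e i), Set.mem_insert _ _, u,
          Set.mem_insert_iff.mpr (Or.inr ⟨huD, hau⟩), hadj.symm⟩
    · rintro ⟨v₁, hv₁, v₂, hv₂, hadj⟩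
      have hne : e i ≠ e j := fun h => hij (e.injective h)
      refine ⟨hne, ?_⟩
      rcases hv₁ with rfl | ⟨h1D, h1a⟩ <;> rcases hv₂ with rfl | ⟨h2D, h2a⟩
      · rcases hbip _ _ hadj with ⟨_, h⟩ | ⟨h, _⟩
        · exact absurd h (fun h => hXY _ (e j).2 h)
        · exact absurd h (fun h => hXY _ (e i).2 h)
      · exact ⟨v₂, h2D, Or.inr ⟨h2a, hadj.symm⟩⟩
      · exact ⟨v₁, h1D, Or.inl ⟨h1a, hadj⟩⟩
      · rcases hbip _ _ hadj with ⟨h, _⟩ | ⟨_, h⟩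
        · exact absurd h (fun h => hXY _ h (hDY _ h1D))
        · exact absurd h (fun h => hXY _ h (hDY _ h2D))

private lemma clique_le_omega {ℓ n m : ℕ} (hn : n ≤ ℓ) {H : SimpleGraph (Fin n)}
    (hH : IsShallowMinorAtDepth G 1 H) {s : Finset (Fin n)} (hs : H.IsNClique m s) :
    m ≤ omegaMinors G 1 ℓ := by
  apply le_csSup
  · refine ⟨ℓ, ?_⟩
    rintro m' ⟨n', H', hn', _, s', hs'⟩
    calc m' = s'.card := hs'.card_eq.symm
    _ ≤ Fintype.card (Fin n') := Finset.card_le_univ s'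
    _ = n' := Fintype.card_fin n'
    _ ≤ ℓ := hn'
  · exact ⟨n, H, hn, hH, s, hs⟩

private lemma ratio_le_nabla {ℓ n : ℕ} (hn0 : 0 < n) (hn : n ≤ ℓ)
    {H : SimpleGraph (Fin n)} (hH : IsShallowMinorAtDepth G 1 H) :
    (H.edgeSet.ncard : ℝ) / (n : ℝ) ≤ nabla0Minors G 1 ℓ := by
  apply le_csSup
  · refine ⟨(ℓ : ℝ), ?_⟩
    rintro q ⟨n', H', hn0', hn', _, rfl⟩
    have hℓ1 : 1 ≤ ℓ := le_trans hn0' hn'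
    have hcard : H'.edgeSet.ncard ≤ ℓ * n' := by
      have h1 : H'.edgeSet.ncard ≤ Fintype.card (Sym2 (Fin n')) := by
        calc H'.edgeSet.ncard ≤ (Set.univ : Set (Sym2 (Fin n'))).ncard :=
              Set.ncard_le_ncard (Set.subset_univ _) Set.finite_univ
        _ = Fintype.card (Sym2 (Fin n')) := by
              rw [Set.ncard_univ, Nat.card_eq_fintype_card]
      have h2 : Fintype.card (Sym2 (Fin n')) = (n' + 1).choose 2 := by
        rw [Sym2.card, Fintype.card_fin]
      have h3 : (n' + 1).choose 2 ≤ ℓ * n' := by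
        rw [Nat.choose_two_right]
        simp only [Nat.add_sub_cancel]
        calc (n' + 1) * n' / 2 ≤ (2 * ℓ) * n' / 2 := by
              apply Nat.div_le_div_right
              exact Nat.mul_le_mul_right _ (by omega)
        _ = ℓ * n' := by rw [Nat.mul_assoc, Nat.mul_div_cancel_left _ (by norm_num)]
      omega
    rw [div_le_iff₀ (by exact_mod_cast hn0')]
    calc (H'.edgeSet.ncard : ℝ) ≤ ((ℓ * n' : ℕ) : ℝ) := by exact_mod_cast hcard
    _ = (ℓ : ℝ) * (n' : ℝ) := by push_cast; ring
  · exact ⟨n, H, hn0, hn, hH, rfl⟩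

end Aux
section Core

variable {V : Type*} [Fintype V] {G : SimpleGraph V} {X Y : Set V}

private lemma core (hdisj : Disjoint X Y)
    (hbip : ∀ u v, G.Adj u v → (u ∈ X ∧ v ∈ Y) ∨ (u ∈ Y ∧ v ∈ X))
    {ℓ : ℕ} (e : Fin ℓ ≃ ↥X) (D : Finset V) :
    (∀ u ∈ D, u ∈ Y) → (∀ u ∈ D, omegaMinors G 1 ℓ < (G.neighborSet u).ncard) →
    ∃ a : V → V, (∀ u ∈ D, a u ∈ X ∧ G.Adj u (a u)) ∧
      D.card ≤ (auxF G X D a).edgeSet.ncard := by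
  classical
  induction D using Finset.induction_on with
  | empty => exact fun _ _ => ⟨id, by simp, by simp⟩
  | @insert u D hu ih =>
    intro hY hdeg
    obtain ⟨a, ha, hcard⟩ := ih (fun w hw => hY w (Finset.mem_insert_of_mem hw))
      (fun w hw => hdeg w (Finset.mem_insert_of_mem hw))
    have huY : u ∈ Y := hY u (Finset.mem_insert_self u D)
    -- every neighbor of u lies in X
    have hNX : ∀ v, G.Adj u v → v ∈ X := by
      intro v hv
      rcases hbip _ _ hv with ⟨h1, _⟩ | ⟨_, h2⟩
      · exact absurd huY (Set.disjoint_left.mp hdisj h1)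
      · exact h2
    -- there are two nonadjacent (in auxF) neighbors of u
    have hex : ∃ x y : ↥X, G.Adj u ↑x ∧ G.Adj u ↑y ∧ x ≠ y ∧ ¬(auxF G X D a).Adj x y := by
      by_contra hcon
      push_neg at hcon
      -- neighbors of u embed into ↥X, forming a clique
      set f : ↥(G.neighborSet u) → ↥X := fun v => ⟨↑v, hNX _ v.2⟩ with hf
      have hfinj : Function.Injective f := by
        intro v w h
        exact Subtype.ext (Subtype.mk_eq_mk.mp h)
      set s : Finset ↥X := Finset.univ.map ⟨f, hfinj⟩ with hs
      have hclique : (auxF G X D a).IsNClique ((G.neighborSet u).ncard) s := by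
        constructor
        · intro x hx y hy hxy
          simp only [hs, Finset.mem_coe, Finset.mem_map, Finset.mem_univ, true_and] at hx hy
          obtain ⟨v, rfl⟩ := hx
          obtain ⟨w, rfl⟩ := hy
          exact hcon _ _ v.2 w.2 hxy
        · rw [Finset.card_map, Finset.card_univ, ← Nat.card_eq_fintype_card,
            Nat.card_coe_set_eq]
      -- transport to Fin ℓ
      set t : Finset (Fin ℓ) := s.map e.symm.toEmbedding with ht
      have htclique : ((auxF G X D a).comap e.toEmbedding).IsNClique
          ((G.neighborSet u).ncard) t := by
        constructor
        · intro i hi j hj hij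
          simp only [ht, Finset.mem_coe, Finset.mem_map, Equiv.coe_toEmbedding] at hi hj
          obtain ⟨x, hx, rfl⟩ := hi
          obtain ⟨y, hy, rfl⟩ := hj
          show (auxF G X D a).Adj (e (e.symm x)) (e (e.symm y))
          rw [e.apply_symm_apply, e.apply_symm_apply]
          exact hclique.1 hx hy (fun h => hij (by rw [h]))
        · rw [Finset.card_map]; exact hclique.2
      have := clique_le_omega (le_refl ℓ)
        (auxF_minor hdisj hbip (fun w hw => hY w (Finset.mem_insert_of_mem hw))
          (fun w hw => ha w hw) e) htclique
      exact absurd this (not_le.mpr (hdeg u (Finset.mem_insert_self u D)))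
    obtain ⟨x, y, hx, hy, hxy, hnadj⟩ := hex
    refine ⟨Function.update a u ↑x, ?_, ?_⟩
    · intro w hw
      rcases Finset.mem_insert.mp hw with rfl | hwD
      · rw [Function.update_self]
        exact ⟨x.2, hx⟩
      · have hwu : w ≠ u := fun h' => hu (h' ▸ hwD)
        rw [Function.update_of_ne hwu]
        exact ha w hwD
    · have hle : auxF G X D a ≤ auxF G X (insert u D) (Function.update a u ↑x) := by
        rintro p q ⟨hpq, w, hwD, h⟩
        have hwu : w ≠ u := fun h' => hu (h' ▸ hwD)
        exact ⟨hpq, w, Finset.mem_insert_of_mem hwD, by rwa [Function.update_of_ne hwu]⟩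
      have hnew : (auxF G X (insert u D) (Function.update a u ↑x)).Adj x y :=
        ⟨hxy, u, Finset.mem_insert_self u D, Or.inl ⟨Function.update_self u _ a, hy⟩⟩
      have hssub : (auxF G X D a).edgeSet ⊂
          (auxF G X (insert u D) (Function.update a u ↑x)).edgeSet := by
        refine ⟨SimpleGraph.edgeSet_mono hle, fun hsub => ?_⟩
        exact hnadj ((SimpleGraph.mem_edgeSet _).mp (hsub ((SimpleGraph.mem_edgeSet _).mpr hnew)))
      have hlt := Set.ncard_lt_ncard hssub (Set.toFinite _)
      rw [Finset.card_insert_of_notMem hu]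
      omega

end Core

/-- In a finite bipartite graph with parts `X` and `Y`, with `𝓗 = (G∇1)_{≤|X|}`,
the number of vertices of `Y` of degree greater than `ω(𝓗)` is at most `2∇₀(𝓗)·|X|`. -/
theorem bipartite_few_high_degree_vertices_general
    {V : Type*} [Fintype V] (G : SimpleGraph V) (X Y : Set V)
    (hunion : X ∪ Y = Set.univ) (hdisj : Disjoint X Y)
    (hbip : ∀ u v, G.Adj u v → (u ∈ X ∧ v ∈ Y) ∨ (u ∈ Y ∧ v ∈ X)) :
    (({u ∈ Y | omegaMinors G 1 X.ncard < (G.neighborSet u).ncard}.ncard : ℝ)) ≤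
      2 * nabla0Minors G 1 X.ncard * (X.ncard : ℝ) := by
  classical
  set ℓ := X.ncard with hℓ
  rcases Nat.eq_zero_or_pos ℓ with h0 | hpos
  · have hXe : X = ∅ := (Set.ncard_eq_zero (Set.toFinite X)).mp h0
    have hDe : {u ∈ Y | omegaMinors G 1 ℓ < (G.neighborSet u).ncard} = ∅ := by
      ext u
      simp only [Set.mem_setOf_eq, Set.mem_empty_iff_false, iff_false, not_and]
      intro huY hlt
      have hne : (G.neighborSet u).Nonempty := by
        rw [← Set.ncard_pos (Set.toFinite _)]
        omega
      obtain ⟨v, hv⟩ := hne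
      rcases hbip u v hv with ⟨h1, _⟩ | ⟨_, h2⟩
      · exact absurd h1 (by simp [hXe])
      · exact absurd h2 (by simp [hXe])
    rw [hDe, h0]
    simp
  · have hcardX : Fintype.card ↥X = ℓ := by
      rw [hℓ, Set.ncard_eq_toFinset_card', Set.toFinset_card]
    have e : Fin ℓ ≃ ↥X := (Fintype.equivFinOfCardEq hcardX).symm
    set Dset := {u ∈ Y | omegaMinors G 1 ℓ < (G.neighborSet u).ncard} with hDset
    set D := Dset.toFinset with hD
    have hyY : ∀ u ∈ D, u ∈ Y := fun u hu => (Set.mem_toFinset.mp hu).1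
    have hydeg : ∀ u ∈ D, omegaMinors G 1 ℓ < (G.neighborSet u).ncard :=
      fun u hu => (Set.mem_toFinset.mp hu).2
    obtain ⟨a, ha, hcard⟩ := core hdisj hbip e D hyY hydeg
    have hminor := auxF_minor hdisj hbip hyY ha e
    have hedge : ((auxF G X D a).comap e.toEmbedding).edgeSet.ncard
        = (auxF G X D a).edgeSet.ncard := by
      rw [← Nat.card_coe_set_eq, ← Nat.card_coe_set_eq]
      exact Nat.card_congr (SimpleGraph.Iso.comap e (auxF G X D a)).mapEdgeSet
    have hle := ratio_le_nabla hpos (le_refl ℓ) hminor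
    have hD' : Dset.ncard = D.card := Set.ncard_eq_toFinset_card' Dset
    have hnab0 : 0 ≤ nabla0Minors G 1 ℓ := le_trans (by positivity) hle
    rw [hD']
    have hmain : (D.card : ℝ) ≤ nabla0Minors G 1 ℓ * ℓ := by
      rw [div_le_iff₀ (by exact_mod_cast hpos)] at hle
      calc (D.card : ℝ) ≤ ((((auxF G X D a).comap e.toEmbedding).edgeSet.ncard : ℕ) : ℝ) := by
            exact_mod_cast hedge ▸ hcard
      _ ≤ nabla0Minors G 1 ℓ * ℓ := hle
    have hℓpos : (0 : ℝ) < (ℓ : ℝ) := by exact_mod_cast hpos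
    nlinarith
end

section
/- Let G be a finite simple bipartite graph whose vertex set is partitioned into parts X and Y (every edge of G has one endpoint in X and one endpoint in Y), and let 𝓗 = (G∇1)_{≤|X|} be the set of shallow minors of G at depth 1 having at most |X| vertices. Then the number of distinct nonempty subsets X' ⊆ X such that X' = N(u) for some u ∈ Y is at most (clique-grad₀(𝓗) + 2∇₀(𝓗))·|X|. -/
/-- `#ω(H)`: the number of nonempty cliques of `H`. -/
noncomputable def numCliques {W : Type*} (H : SimpleGraph W) : ℕ :=
  {s : Finset W | s.Nonempty ∧ H.IsClique (s : Set W)}.ncard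

/-- `clique-grad₀((G∇d)_{≤ℓ})`: the supremum of `#ω(H)/|V(H)|` over nonempty shallow
minors of `G` at depth `d` having at most `ℓ` vertices. -/
noncomputable def cliqueGrad0Minors {V : Type*} (G : SimpleGraph V) (d ℓ : ℕ) : ℝ :=
  sSup { q : ℝ | ∃ (n : ℕ) (H : SimpleGraph (Fin n)), 0 < n ∧ n ≤ ℓ ∧
    IsShallowMinorAtDepth G d H ∧ q = (numCliques H : ℝ) / (n : ℝ) }

section Aux
open scoped Classical
variable {V : Type*} {n : ℕ} (G : SimpleGraph V)

def auxGraph (f : Fin n → V) (P : Finset (V × V)) : SimpleGraph (Fin n) where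
  Adj i j := i ≠ j ∧ ∃ p ∈ P, (p.2 = f i ∧ G.Adj p.1 (f j)) ∨ (p.2 = f j ∧ G.Adj p.1 (f i))
  symm := ⟨by
    rintro i j ⟨hne, p, hp, h⟩
    exact ⟨hne.symm, p, hp, h.symm⟩⟩
  loopless := ⟨fun i h => h.1 rfl⟩

variable {G} {X Y : Set V}

theorem auxGraph_mono (f : Fin n → V) {P Q : Finset (V × V)} (h : P ⊆ Q) :
    auxGraph G f P ≤ auxGraph G f Q := by
  rintro i j ⟨hne, p, hp, hh⟩
  exact ⟨hne, p, h hp, hh⟩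

theorem counting (f : Fin n → V)
    (𝒮 : Finset (Set V)) (h𝒮 : ∀ S ∈ 𝒮, ∃ u ∈ Y, S = G.neighborSet u) :
    ∃ P : Finset (V × V),
      (∀ p ∈ P, p.1 ∈ Y ∧ p.2 ∈ Set.range f ∧ G.Adj p.1 p.2) ∧
      (∀ p ∈ P, ∀ q ∈ P, p.1 = q.1 → p.2 = q.2) ∧
      (∀ p ∈ P, G.neighborSet p.1 ∈ 𝒮) ∧
      𝒮.card ≤ (𝒮.filter (fun S => (auxGraph G f P).IsClique {i | f i ∈ S})).card
        + (auxGraph G f P).edgeSet.ncard := by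
  classical
  induction 𝒮 using Finset.induction_on with
  | empty => exact ⟨∅, by simp, by simp, by simp, by simp⟩
  | @insert S₀ 𝒮 hS₀ ih =>
    obtain ⟨P, hP1, hP2, hPmem, hcard⟩ :=
      ih (fun S hS => h𝒮 S (Finset.mem_insert_of_mem hS))
    by_cases hclq : (auxGraph G f P).IsClique {i | f i ∈ S₀}
    · refine ⟨P, hP1, hP2, fun p hp => Finset.mem_insert_of_mem (hPmem p hp), ?_⟩
      rw [Finset.card_insert_of_notMem hS₀, Finset.filter_insert, if_pos hclq,
        Finset.card_insert_of_notMem (fun h => hS₀ (Finset.mem_of_mem_filter _ h))]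
      omega
    · -- find a non-adjacent pair inside S₀
      rw [SimpleGraph.isClique_iff, Set.Pairwise] at hclq
      push_neg at hclq
      obtain ⟨a, ha, b, hb, hab, hnadj⟩ := hclq
      obtain ⟨u₀, hu₀Y, hu₀N⟩ := h𝒮 S₀ (Finset.mem_insert_self _ _)
      have hu₀fresh : ∀ x, (u₀, x) ∉ P := by
        intro x hx
        exact hS₀ (by simpa [← hu₀N] using hPmem _ hx)
      set Q : Finset (V × V) := insert (u₀, f a) P with hQ
      have hPQ : P ⊆ Q := Finset.subset_insert _ _
      have hle : auxGraph G f P ≤ auxGraph G f Q := auxGraph_mono f hPQ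
      have hadj_a : G.Adj u₀ (f a) := by
        rw [← SimpleGraph.mem_neighborSet, ← hu₀N]; exact ha
      have hadj_b : G.Adj u₀ (f b) := by
        rw [← SimpleGraph.mem_neighborSet, ← hu₀N]; exact hb
      have hnew : (auxGraph G f Q).Adj a b :=
        ⟨hab, (u₀, f a), Finset.mem_insert_self _ _, Or.inl ⟨rfl, hadj_b⟩⟩
      refine ⟨Q, ?_, ?_, ?_, ?_⟩
      · rintro p hp
        rcases Finset.mem_insert.mp hp with rfl | hp'
        · exact ⟨hu₀Y, ⟨a, rfl⟩, hadj_a⟩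
        · exact hP1 p hp'
      · rintro p hp q hq heq
        rcases Finset.mem_insert.mp hp with rfl | hp' <;>
          rcases Finset.mem_insert.mp hq with rfl | hq'
        · rfl
        · exfalso; obtain ⟨q1, q2⟩ := q
          have heq' : u₀ = q1 := heq
          subst heq'; exact hu₀fresh q2 hq'
        · exfalso; obtain ⟨p1, p2⟩ := p
          have heq' : p1 = u₀ := heq
          subst heq'; exact hu₀fresh p2 hp'
        · exact hP2 p hp' q hq' heq
      · rintro p hp
        rcases Finset.mem_insert.mp hp with rfl | hp'
        · simp [← hu₀N]
        · exact Finset.mem_insert_of_mem (hPmem p hp')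
      · -- counting
        have hedges : (auxGraph G f P).edgeSet.ncard + 1 ≤ (auxGraph G f Q).edgeSet.ncard := by
          have hss : (auxGraph G f P).edgeSet ⊂ (auxGraph G f Q).edgeSet := by
            constructor
            · exact fun e he => SimpleGraph.edgeSet_mono hle he
            · intro hsub
              exact hnadj (((auxGraph G f P).mem_edgeSet).mp
                (hsub (((auxGraph G f Q).mem_edgeSet).mpr hnew)))
          exact Set.ncard_lt_ncard hss (Set.toFinite _)
        have hfilter : (𝒮.filter (fun S => (auxGraph G f P).IsClique {i | f i ∈ S})).card ≤
            ((insert S₀ 𝒮).filter (fun S => (auxGraph G f Q).IsClique {i | f i ∈ S})).card := by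
          apply Finset.card_le_card
          intro S hS
          rw [Finset.mem_filter] at hS ⊢
          exact ⟨Finset.mem_insert_of_mem hS.1, hS.2.mono hle⟩
        rw [Finset.card_insert_of_notMem hS₀]
        omega

theorem auxGraph_isShallowMinor
    (hdisj : Disjoint X Y)
    (hbip : ∀ u v, G.Adj u v → (u ∈ X ∧ v ∈ Y) ∨ (u ∈ Y ∧ v ∈ X))
    (f : Fin n → V) (hfinj : Function.Injective f) (hfX : ∀ i, f i ∈ X)
    (P : Finset (V × V))
    (hP1 : ∀ p ∈ P, p.1 ∈ Y ∧ p.2 ∈ Set.range f ∧ G.Adj p.1 p.2)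
    (hP2 : ∀ p ∈ P, ∀ q ∈ P, p.1 = q.1 → p.2 = q.2) :
    IsShallowMinorAtDepth G 1 (auxGraph G f P) := by
  classical
  have hXY : ∀ v, v ∈ X → v ∈ Y → False := fun v hx hy =>
    Set.disjoint_left.mp hdisj hx hy
  refine ⟨fun i => {f i} ∪ {u | (u, f i) ∈ P}, fun i => ⟨f i, Or.inl rfl⟩, ?_, ?_, ?_⟩
  · -- disjointness
    intro i j hij
    rw [Set.disjoint_left]
    rintro v (rfl | hv) (hv2 | hv2)
    · exact hij (hfinj hv2)
    · exact hXY _ (hfX i) (hP1 _ hv2).1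
    · rw [Set.mem_singleton_iff] at hv2; subst hv2
      exact hXY _ (hfX j) (hP1 _ hv).1
    · exact hij (hfinj (hP2 _ hv _ hv2 rfl))
  · -- radius 1
    intro i
    refine ⟨⟨f i, Or.inl rfl⟩, ?_⟩
    rintro ⟨u, (rfl | hu)⟩
    · exact ⟨SimpleGraph.Walk.nil, by simp⟩
    · have hadj : (SimpleGraph.induce ({f i} ∪ {u | (u, f i) ∈ P} : Set V) G).Adj
          ⟨f i, Or.inl rfl⟩ ⟨u, Or.inr hu⟩ := by
        simp only [SimpleGraph.comap_adj, Function.Embedding.coe_subtype]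
        exact ((hP1 _ hu).2.2).symm
      exact ⟨hadj.toWalk, le_of_eq rfl⟩
  · -- adjacency
    intro i j hij
    constructor
    · rintro ⟨-, p, hp, (⟨h2, hadj⟩ | ⟨h2, hadj⟩)⟩
      · exact ⟨p.1, Or.inr (by simpa [← h2] using hp), f j, Or.inl rfl, hadj⟩
      · refine ⟨f i, Or.inl rfl, p.1, Or.inr (by simpa [← h2] using hp), hadj.symm⟩
    · rintro ⟨v₁, (rfl | hv₁), v₂, (rfl | hv₂), hadj⟩
      · rcases hbip _ _ hadj with ⟨h1, h2⟩ | ⟨h1, h2⟩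
        · exact absurd (hfX j) (fun hx => hXY _ hx h2)
        · exact absurd (hfX i) (fun hx => hXY _ hx h1)
      · exact ⟨hij, _, hv₂, Or.inr ⟨rfl, hadj.symm⟩⟩
      · exact ⟨hij, _, hv₁, Or.inl ⟨rfl, hadj⟩⟩
      · rcases hbip _ _ hadj with ⟨h1, h2⟩ | ⟨h1, h2⟩
        · exact absurd h1 (fun hx => hXY _ hx (hP1 _ hv₁).1)
        · exact absurd h2 (fun hx => hXY _ hx (hP1 _ hv₂).1)

theorem numCliques_le {n : ℕ} (H : SimpleGraph (Fin n)) : numCliques H ≤ 2 ^ n := by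
  classical
  calc numCliques H ≤ (Set.univ : Set (Finset (Fin n))).ncard :=
        Set.ncard_le_ncard (Set.subset_univ _) (Set.toFinite _)
    _ = 2 ^ n := by
        rw [Set.ncard_univ, Nat.card_eq_fintype_card, Fintype.card_finset, Fintype.card_fin]

theorem edge_ncard_le {n : ℕ} (H : SimpleGraph (Fin n)) : H.edgeSet.ncard ≤ (n+1)*(n+1) := by
  classical
  calc H.edgeSet.ncard ≤ (Set.univ : Set (Sym2 (Fin n))).ncard :=
        Set.ncard_le_ncard (Set.subset_univ _) (Set.toFinite _)
    _ = Nat.choose (n+1) 2 := by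
        rw [Set.ncard_univ, Nat.card_eq_fintype_card, Sym2.card, Fintype.card_fin]
    _ ≤ (n+1)*(n+1) := by
        rw [Nat.choose_two_right]
        exact le_trans (Nat.div_le_self _ _) (Nat.mul_le_mul_left _ (by omega))

theorem bddAbove_nablaSet {V : Type*} (G : SimpleGraph V) (d ℓ : ℕ) :
    BddAbove { q : ℝ | ∃ (n : ℕ) (H : SimpleGraph (Fin n)), 0 < n ∧ n ≤ ℓ ∧
      IsShallowMinorAtDepth G d H ∧ q = (H.edgeSet.ncard : ℝ) / (n : ℝ) } := by
  refine ⟨(((ℓ+1)*(ℓ+1) : ℕ) : ℝ), ?_⟩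
  rintro q ⟨n, H, hn, hnℓ, -, rfl⟩
  have h1 : (H.edgeSet.ncard : ℝ) ≤ (((ℓ+1)*(ℓ+1) : ℕ) : ℝ) := by
    exact_mod_cast le_trans (edge_ncard_le H) (Nat.mul_le_mul (by omega) (by omega))
  refine le_trans (div_le_self ?_ ?_) h1
  · positivity
  · exact_mod_cast hn

theorem bddAbove_cliqueSet {V : Type*} (G : SimpleGraph V) (d ℓ : ℕ) :
    BddAbove { q : ℝ | ∃ (n : ℕ) (H : SimpleGraph (Fin n)), 0 < n ∧ n ≤ ℓ ∧
      IsShallowMinorAtDepth G d H ∧ q = (numCliques H : ℝ) / (n : ℝ) } := by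
  refine ⟨((2 ^ ℓ : ℕ) : ℝ), ?_⟩
  rintro q ⟨n, H, hn, hnℓ, -, rfl⟩
  have h1 : (numCliques H : ℝ) ≤ ((2 ^ ℓ : ℕ) : ℝ) := by
    exact_mod_cast le_trans (numCliques_le H) (Nat.pow_le_pow_right (by omega) hnℓ)
  refine le_trans (div_le_self ?_ ?_) h1
  · positivity
  · exact_mod_cast hn

theorem singleton_minor {V : Type*} (G : SimpleGraph V) (v : V) :
    IsShallowMinorAtDepth G 1 (⊥ : SimpleGraph (Fin 1)) := by
  refine ⟨fun _ => {v}, fun _ => ⟨v, rfl⟩, ?_, ?_, ?_⟩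
  · intro w₁ w₂ h; exact absurd (Subsingleton.elim w₁ w₂) h
  · intro w
    refine ⟨⟨v, rfl⟩, ?_⟩
    rintro ⟨u, hu⟩
    rcases hu with rfl
    exact ⟨SimpleGraph.Walk.nil, by simp⟩
  · intro w₁ w₂ h; exact absurd (Subsingleton.elim w₁ w₂) h

theorem nabla0_nonneg {V : Type*} (G : SimpleGraph V) (ℓ : ℕ) (hℓ : 1 ≤ ℓ) (v : V) :
    0 ≤ nabla0Minors G 1 ℓ := by
  refine le_csSup (bddAbove_nablaSet G 1 ℓ) ⟨1, ⊥, one_pos, hℓ, singleton_minor G v, ?_⟩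
  simp

end Aux

/-- In a finite bipartite graph with parts `X` and `Y`, with `𝓗 = (G∇1)_{≤|X|}`, the
number of distinct nonempty subsets `X' ⊆ X` that are the neighborhood of some vertex
of `Y` is at most `(clique-grad₀(𝓗) + 2∇₀(𝓗))·|X|`. -/
theorem bipartite_few_neighborhood_subsets_general
    {V : Type*} [Fintype V] (G : SimpleGraph V) (X Y : Set V)
    (hunion : X ∪ Y = Set.univ) (hdisj : Disjoint X Y)
    (hbip : ∀ u v, G.Adj u v → (u ∈ X ∧ v ∈ Y) ∨ (u ∈ Y ∧ v ∈ X)) :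
    (({X' : Set V | X'.Nonempty ∧ X' ⊆ X ∧ ∃ u ∈ Y, X' = G.neighborSet u}.ncard : ℝ)) ≤
      (cliqueGrad0Minors G 1 X.ncard + 2 * nabla0Minors G 1 X.ncard) * (X.ncard : ℝ) := by
  classical
  set ℓ := X.ncard with hℓ
  by_cases hX0 : ℓ = 0
  · have hXe : X = ∅ := (Set.ncard_eq_zero (Set.toFinite X)).mp hX0
    have hempty : {X' : Set V | X'.Nonempty ∧ X' ⊆ X ∧ ∃ u ∈ Y, X' = G.neighborSet u} = ∅ := by
      ext S
      simp only [Set.mem_setOf_eq, Set.mem_empty_iff_false, iff_false, not_and]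
      intro hne hsub
      rw [hXe, Set.subset_empty_iff] at hsub
      exact absurd hsub hne.ne_empty.elim
    rw [hempty, hX0]
    simp
  · have hn : 0 < ℓ := Nat.pos_of_ne_zero hX0
    have hcard : Fintype.card ↥X = ℓ := by
      rw [← Nat.card_eq_fintype_card, Nat.card_coe_set_eq]
    let e : Fin ℓ ≃ ↥X := (Fintype.equivFinOfCardEq hcard).symm
    let f : Fin ℓ → V := fun i => ↑(e i)
    have hfinj : Function.Injective f := fun i j h => e.injective (Subtype.ext h)
    have hfX : ∀ i, f i ∈ X := fun i => (e i).2
    have hfsurj : ∀ x ∈ X, ∃ i, f i = x := fun x hx => ⟨e.symm ⟨x, hx⟩, by simp [f]⟩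
    set ℒset := {X' : Set V | X'.Nonempty ∧ X' ⊆ X ∧ ∃ u ∈ Y, X' = G.neighborSet u} with hℒ
    have hℒfin : ℒset.Finite := Set.toFinite _
    set 𝓢 : Finset (Set V) := hℒfin.toFinset with h𝓢
    have hmem : ∀ S ∈ 𝓢, S.Nonempty ∧ S ⊆ X ∧ ∃ u ∈ Y, S = G.neighborSet u := by
      intro S hS
      rw [h𝓢, Set.Finite.mem_toFinset] at hS
      exact hS
    obtain ⟨P, hP1, hP2, hPmem, hcount⟩ :=
      counting f 𝓢 (fun S hS => (hmem S hS).2.2)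
    set H := auxGraph G f P with hH
    have hminor := auxGraph_isShallowMinor hdisj hbip f hfinj hfX P hP1 hP2
    -- injection from the cliques-filter into nonempty cliques of H
    set Φ : Set V → Finset (Fin ℓ) := fun S => Finset.univ.filter (fun i => f i ∈ S) with hΦ
    have hΦcoe : ∀ S, (↑(Φ S) : Set (Fin ℓ)) = {i | f i ∈ S} := by
      intro S; ext i; simp [Φ]
    have hclique : (𝓢.filter (fun S => H.IsClique {i | f i ∈ S})).card ≤ numCliques H := by
      rw [← Finset.card_image_of_injOn (f := Φ) ?_]
      · rw [← Set.ncard_coe_finset]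
        apply Set.ncard_le_ncard ?_ (Set.toFinite _)
        rintro t ht
        simp only [Finset.coe_image, Set.mem_image, Finset.mem_coe] at ht
        obtain ⟨S, hS, rfl⟩ := ht
        rw [Finset.mem_filter] at hS
        obtain ⟨hSℒ, hSclq⟩ := hS
        obtain ⟨hSne, hSX, -⟩ := hmem S hSℒ
        constructor
        · obtain ⟨x, hx⟩ := hSne
          obtain ⟨i, rfl⟩ := hfsurj x (hSX hx)
          exact ⟨i, by simp [Φ, hx]⟩
        · rw [hΦcoe]; exact hSclq
      · intro S hS S' hS' hSS
        rw [Finset.mem_coe, Finset.mem_filter] at hS hS'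
        obtain ⟨-, hSX, -⟩ := hmem S hS.1
        obtain ⟨-, hS'X, -⟩ := hmem S' hS'.1
        ext x
        constructor
        · intro hx
          obtain ⟨i, rfl⟩ := hfsurj x (hSX hx)
          have : i ∈ Φ S := by simp [Φ, hx]
          rw [hSS] at this
          simpa [Φ] using this
        · intro hx
          obtain ⟨i, rfl⟩ := hfsurj x (hS'X hx)
          have : i ∈ Φ S' := by simp [Φ, hx]
          rw [← hSS] at this
          simpa [Φ] using this
    -- sSup bounds
    have hc : (numCliques H : ℝ) / (ℓ : ℝ) ≤ cliqueGrad0Minors G 1 ℓ :=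
      le_csSup (bddAbove_cliqueSet G 1 ℓ) ⟨ℓ, H, hn, le_refl ℓ, hminor, rfl⟩
    have he : (H.edgeSet.ncard : ℝ) / (ℓ : ℝ) ≤ nabla0Minors G 1 ℓ :=
      le_csSup (bddAbove_nablaSet G 1 ℓ) ⟨ℓ, H, hn, le_refl ℓ, hminor, rfl⟩
    have hv : ∃ v, v ∈ X := by
      rw [← Set.nonempty_def, ← Set.ncard_pos (Set.toFinite X)]; exact hn
    obtain ⟨v, -⟩ := hv
    have h0 : 0 ≤ nabla0Minors G 1 ℓ := nabla0_nonneg G ℓ hn v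
    have hℓpos : (0 : ℝ) < (ℓ : ℝ) := by exact_mod_cast hn
    have hc' : (numCliques H : ℝ) ≤ cliqueGrad0Minors G 1 ℓ * ℓ := by
      rw [div_le_iff₀ hℓpos] at hc; exact hc
    have he' : (H.edgeSet.ncard : ℝ) ≤ nabla0Minors G 1 ℓ * ℓ := by
      rw [div_le_iff₀ hℓpos] at he; exact he
    have hk : ℒset.ncard = 𝓢.card := Set.ncard_eq_toFinset_card _ hℒfin
    have hcount' : (ℒset.ncard : ℝ) ≤ (numCliques H : ℝ) + (H.edgeSet.ncard : ℝ) := by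
      rw [hk]
      exact_mod_cast le_trans hcount (by omega)
    calc (ℒset.ncard : ℝ) ≤ (numCliques H : ℝ) + (H.edgeSet.ncard : ℝ) := hcount'
      _ ≤ cliqueGrad0Minors G 1 ℓ * ℓ + nabla0Minors G 1 ℓ * ℓ := add_le_add hc' he'
      _ ≤ (cliqueGrad0Minors G 1 ℓ + 2 * nabla0Minors G 1 ℓ) * ℓ := by nlinarith
end

section
/- Let G be a finite simple graph, S ⊆ V(G), δ ∈ ℕ, and let 𝓗_S = (G∇(δ+1))_{≤|S|} be the set of shallow minors of G at depth δ+1 having at most |S| vertices. Let C₁,…,C_s be pairwise vertex-disjoint connected subgraphs of G − S such that for each 1 ≤ i ≤ s the induced subgraph G[V(Cᵢ)] is connected with diameter at most δ and |N_S(Cᵢ)| > ω(𝓗_S). Then s ≤ 2∇₀(𝓗_S)·|S|. -/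
/-- `N_S(C)`: vertices of `S` having at least one neighbor in `C`. -/
def nbrIn {V : Type*} (G : SimpleGraph V) (S C : Set V) : Set V :=
  {v ∈ S | ∃ u ∈ C, G.Adj v u}

section Aux

variable {V : Type*}

def contractGraph (G : SimpleGraph V) {n : ℕ} (B : Fin n → Set V) :
    SimpleGraph (Fin n) where
  Adj w₁ w₂ := w₁ ≠ w₂ ∧ ∃ v₁ ∈ B w₁, ∃ v₂ ∈ B w₂, G.Adj v₁ v₂
  symm := by
    constructor; rintro a b ⟨h, v₁, h₁, v₂, h₂, ha⟩
    exact ⟨h.symm, v₂, h₂, v₁, h₁, ha.symm⟩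
  loopless := by constructor; rintro a ⟨h, -⟩; exact h rfl

def branchSets {s n : ℕ} (C : Fin s → Set V) (ρ : Fin s → V) (k : ℕ)
    (ε : Fin n → V) : Fin n → Set V :=
  fun w => insert (ε w) (⋃ i ∈ {i : Fin s | i.val < k ∧ ρ i = ε w}, C i)

theorem mem_branchSets {s n : ℕ} {C : Fin s → Set V} {ρ : Fin s → V} {k : ℕ}
    {ε : Fin n → V} {w : Fin n} {x : V} :
    x ∈ branchSets C ρ k ε w ↔
      x = ε w ∨ ∃ i : Fin s, (i.val < k ∧ ρ i = ε w) ∧ x ∈ C i := by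
  simp [branchSets, Set.mem_iUnion]

theorem minor_aux (G : SimpleGraph V) (S : Set V) (δ : ℕ) {s : ℕ}
    (C : Fin s → Set V)
    (hsub : ∀ i, C i ⊆ Sᶜ)
    (hdisj : ∀ i j, i ≠ j → Disjoint (C i) (C j))
    (hdiam : ∀ i, ∀ u v : C i,
      ∃ p : (SimpleGraph.induce (C i) G).Walk u v, p.length ≤ δ)
    {n : ℕ} (ε : Fin n → V) (hεinj : Function.Injective ε) (hεS : ∀ w, ε w ∈ S)
    (ρ : Fin s → V) (hρ : ∀ i, ρ i ∈ nbrIn G S (C i)) (k : ℕ) :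
    IsShallowMinorAtDepth G (δ + 1) (contractGraph G (branchSets C ρ k ε)) := by
  refine ⟨branchSets C ρ k ε, ?_, ?_, ?_, ?_⟩
  · intro w; exact ⟨ε w, Set.mem_insert _ _⟩
  · intro w₁ w₂ hne
    rw [Set.disjoint_left]
    intro x hx1 hx2
    rcases mem_branchSets.mp hx1 with rfl | ⟨i, ⟨hik, hρi⟩, hxi⟩
    · rcases mem_branchSets.mp hx2 with h | ⟨j, ⟨hjk, hρj⟩, hxj⟩
      · exact hne (hεinj h)
      · exact hsub j hxj (hεS w₁)
    · rcases mem_branchSets.mp hx2 with rfl | ⟨j, ⟨hjk, hρj⟩, hxj⟩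
      · exact hsub i hxi (hεS w₂)
      · rcases eq_or_ne i j with rfl | hij
        · exact hne (hεinj (hρi ▸ hρj))
        · exact (Set.disjoint_left.mp (hdisj i j hij)) hxi hxj
  · intro w
    refine ⟨⟨ε w, Set.mem_insert _ _⟩, ?_⟩
    rintro ⟨u, hu⟩
    rcases mem_branchSets.mp hu with rfl | ⟨i, ⟨hik, hρi⟩, hui⟩
    · exact ⟨SimpleGraph.Walk.nil, by simp⟩
    · obtain ⟨hρS, y, hy, hadj⟩ := hρ i
      have hCsub : C i ⊆ branchSets C ρ k ε w := fun x hx =>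
        mem_branchSets.mpr (Or.inr ⟨i, ⟨hik, hρi⟩, hx⟩)
      obtain ⟨p, hp⟩ := hdiam i ⟨y, hy⟩ ⟨u, hui⟩
      let f : (SimpleGraph.induce (C i) G) →g
          (SimpleGraph.induce (branchSets C ρ k ε w) G) :=
        ⟨fun x => ⟨x.1, hCsub x.2⟩, fun {a b} hab => hab⟩
      have hadj' : (SimpleGraph.induce (branchSets C ρ k ε w) G).Adj
          ⟨ε w, Set.mem_insert _ _⟩ ⟨y, hCsub hy⟩ := by
        show G.Adj (ε w) y
        exact hρi ▸ hadj
      refine ⟨SimpleGraph.Walk.cons hadj' (p.map f), ?_⟩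
      rw [SimpleGraph.Walk.length_cons, SimpleGraph.Walk.length_map]
      omega
  · intro w₁ w₂ hne
    exact ⟨fun h => h.2, fun h => ⟨hne, h⟩⟩

end Aux

/-- With `𝓗_S = (G∇(δ+1))_{≤|S|}`: if `C₁,…,C_s` are pairwise disjoint connected
subgraphs of `G − S`, each of diameter at most `δ` and with more than `ω(𝓗_S)`
neighbors in `S`, then `s ≤ 2∇₀(𝓗_S)·|S|`. -/
theorem few_components_with_large_neighborhood_general
    {V : Type*} [Fintype V] (G : SimpleGraph V)
    (S : Set V) (δ : ℕ) (s : ℕ) (C : Fin s → Set V)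
    (hsub : ∀ i, C i ⊆ Sᶜ)
    (hdisj : ∀ i j, i ≠ j → Disjoint (C i) (C j))
    (hconn : ∀ i, (SimpleGraph.induce (C i) G).Connected)
    (hdiam : ∀ i, ∀ u v : C i,
      ∃ p : (SimpleGraph.induce (C i) G).Walk u v, p.length ≤ δ)
    (hbig : ∀ i, omegaMinors G (δ + 1) S.ncard < (nbrIn G S (C i)).ncard) :
    (s : ℝ) ≤ 2 * nabla0Minors G (δ + 1) S.ncard * (S.ncard : ℝ) := by
  classical
  rcases Nat.eq_zero_or_pos s with rfl | hs
  · have h1 : 0 ≤ nabla0Minors G (δ + 1) S.ncard := by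
      apply Real.sSup_nonneg
      rintro q ⟨n, H, hn0, hn, hmin, rfl⟩
      positivity
    have h2 : (0:ℝ) ≤ (S.ncard : ℝ) := Nat.cast_nonneg _
    simp only [Nat.cast_zero]
    nlinarith
  have hNsub : ∀ i, nbrIn G S (C i) ⊆ S := fun i x hx => hx.1
  have hNne : ∀ i, (nbrIn G S (C i)).Nonempty := fun i =>
    Set.nonempty_of_ncard_ne_zero (by have := hbig i; omega)
  have hSpos : 0 < S.ncard := by
    have h1 := hbig ⟨0, hs⟩
    have h2 := Set.ncard_le_ncard (hNsub ⟨0, hs⟩) S.toFinite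
    omega
  haveI : Fintype ↥S := Fintype.ofFinite _
  have hcardS : Fintype.card ↥S = S.ncard := by
    rw [← Nat.card_coe_set_eq, Nat.card_eq_fintype_card]
  set n := S.ncard with hn
  let ε' : ↥S ≃ Fin n := Fintype.equivFinOfCardEq hcardS
  let ε : Fin n → V := fun w => ↑(ε'.symm w)
  have hεinj : Function.Injective ε := fun a b h =>
    ε'.symm.injective (Subtype.val_injective h)
  have hεS : ∀ w, ε w ∈ S := fun w => (ε'.symm w).2
  have hεsurj : ∀ v ∈ S, ∃ w, ε w = v := fun v hv =>
    ⟨ε' ⟨v, hv⟩, by simp [ε]⟩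
  have key : ∀ k, k ≤ s → ∃ ρ : Fin s → V, (∀ i, ρ i ∈ nbrIn G S (C i)) ∧
      k ≤ (contractGraph G (branchSets C ρ k ε)).edgeSet.ncard := by
    intro k
    induction k with
    | zero =>
      intro _
      exact ⟨fun i => (hNne i).choose, fun i => (hNne i).choose_spec, Nat.zero_le _⟩
    | succ k ih =>
      intro hk1
      obtain ⟨ρ, hρ, hcardk⟩ := ih (by omega)
      have hks : k < s := by omega
      set i₀ : Fin s := ⟨k, hks⟩ with hi₀
      set N := nbrIn G S (C i₀) with hN
      by_cases hA : ∃ w₁ w₂ : Fin n, ε w₁ ∈ N ∧ ε w₂ ∈ N ∧ w₁ ≠ w₂ ∧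
          ¬ (contractGraph G (branchSets C ρ k ε)).Adj w₁ w₂
      · obtain ⟨w₁, w₂, hu, hv, hw12, hnadj⟩ := hA
        set ρ' : Fin s → V := Function.update ρ i₀ (ε w₂) with hρ'
        have hρ'mem : ∀ i, ρ' i ∈ nbrIn G S (C i) := by
          intro i
          rcases eq_or_ne i i₀ with rfl | hne
          · simpa [ρ', Function.update_self] using hv
          · simpa [ρ', Function.update_of_ne hne] using hρ i
        have hmono : ∀ w, branchSets C ρ k ε w ⊆ branchSets C ρ' (k+1) ε w := by
          intro w x hx
          rcases mem_branchSets.mp hx with rfl | ⟨i, ⟨hik, hρi⟩, hxi⟩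
          · exact mem_branchSets.mpr (Or.inl rfl)
          · have hne : i ≠ i₀ := by
              intro h
              rw [h] at hik
              exact absurd hik (by simp [hi₀])
            refine mem_branchSets.mpr (Or.inr ⟨i, ⟨by omega, ?_⟩, hxi⟩)
            rw [hρ', Function.update_of_ne hne]
            exact hρi
        have hedge : (contractGraph G (branchSets C ρ k ε)).edgeSet ⊆
            (contractGraph G (branchSets C ρ' (k+1) ε)).edgeSet := by
          intro e he
          induction e using Sym2.ind with
          | _ a b =>
            rw [SimpleGraph.mem_edgeSet] at he ⊢
            obtain ⟨hne, v₁, h₁, v₂, h₂, hgadj⟩ := he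
            exact ⟨hne, v₁, hmono a h₁, v₂, hmono b h₂, hgadj⟩
        obtain ⟨huS, x, hx, hux⟩ := hu
        have hadjnew : (contractGraph G (branchSets C ρ' (k+1) ε)).Adj w₁ w₂ := by
          refine ⟨hw12, ε w₁, mem_branchSets.mpr (Or.inl rfl), x, ?_, hux⟩
          refine mem_branchSets.mpr (Or.inr ⟨i₀, ⟨?_, ?_⟩, hx⟩)
          · simp [hi₀]
          · rw [hρ']; exact Function.update_self _ _ _
        have hssub : (contractGraph G (branchSets C ρ k ε)).edgeSet ⊂
            (contractGraph G (branchSets C ρ' (k+1) ε)).edgeSet := by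
          refine ⟨hedge, fun hcon => ?_⟩
          exact hnadj ((SimpleGraph.mem_edgeSet _).mp
            (hcon ((SimpleGraph.mem_edgeSet _).mpr hadjnew)))
        refine ⟨ρ', hρ'mem, ?_⟩
        have := Set.ncard_lt_ncard hssub (Set.toFinite _)
        omega
      · exfalso
        push_neg at hA
        have hNfin : N.Finite := Set.toFinite N
        set t : Finset (Fin n) := Finset.univ.filter (fun w => ε w ∈ N) with ht
        have htcard : t.card = N.ncard := by
          rw [Set.ncard_eq_toFinset_card N hNfin]
          refine Finset.card_bij (fun w _ => ε w) ?_ ?_ ?_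
          · intro a ha
            rw [Set.Finite.mem_toFinset]
            exact (Finset.mem_filter.mp ha).2
          · intro a _ b _ h; exact hεinj h
          · intro v hv
            rw [Set.Finite.mem_toFinset] at hv
            obtain ⟨w, hw⟩ := hεsurj v (hNsub i₀ hv)
            exact ⟨w, Finset.mem_filter.mpr ⟨Finset.mem_univ _, by rw [hw]; exact hv⟩, hw⟩
        have hclique : (contractGraph G (branchSets C ρ k ε)).IsNClique N.ncard t := by
          rw [SimpleGraph.isNClique_iff]
          refine ⟨?_, htcard⟩
          intro w₁ hw₁ w₂ hw₂ hne
          have h₁ : ε w₁ ∈ N := (Finset.mem_filter.mp (Finset.mem_coe.mp hw₁)).2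
          have h₂ : ε w₂ ∈ N := (Finset.mem_filter.mp (Finset.mem_coe.mp hw₂)).2
          exact hA w₁ w₂ h₁ h₂ hne
        have hminor := minor_aux G S δ C hsub hdisj hdiam ε hεinj hεS ρ hρ k
        have hmem : N.ncard ∈ { m : ℕ | ∃ (n' : ℕ) (H' : SimpleGraph (Fin n')),
            n' ≤ n ∧ IsShallowMinorAtDepth G (δ+1) H' ∧
            ∃ s' : Finset (Fin n'), H'.IsNClique m s' } :=
          ⟨n, contractGraph G (branchSets C ρ k ε), le_rfl, hminor, t, hclique⟩
        have hbdd : BddAbove { m : ℕ | ∃ (n' : ℕ) (H' : SimpleGraph (Fin n')),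
            n' ≤ n ∧ IsShallowMinorAtDepth G (δ+1) H' ∧
            ∃ s' : Finset (Fin n'), H'.IsNClique m s' } := by
          refine ⟨n, ?_⟩
          rintro m ⟨n', H', hn', -, t', ht'⟩
          calc m = t'.card := ((SimpleGraph.isNClique_iff _).mp ht').2.symm
            _ ≤ Fintype.card (Fin n') := Finset.card_le_univ t'
            _ = n' := Fintype.card_fin n'
            _ ≤ n := hn'
        have hle : N.ncard ≤ omegaMinors G (δ+1) n := le_csSup hbdd hmem
        have hlt := hbig i₀
        rw [← hN] at hlt
        omega
  obtain ⟨ρ, hρ, hcardE⟩ := key s le_rfl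
  have hminor := minor_aux G S δ C hsub hdisj hdiam ε hεinj hεS ρ hρ s
  set e : ℕ := (contractGraph G (branchSets C ρ s ε)).edgeSet.ncard with he
  have hqmem : ((e:ℝ)/(n:ℝ)) ∈ { q : ℝ | ∃ (n' : ℕ) (H' : SimpleGraph (Fin n')),
      0 < n' ∧ n' ≤ n ∧ IsShallowMinorAtDepth G (δ+1) H' ∧
      q = (H'.edgeSet.ncard : ℝ) / (n' : ℝ) } :=
    ⟨n, contractGraph G (branchSets C ρ s ε), hSpos, le_rfl, hminor, rfl⟩
  have hbdd : BddAbove { q : ℝ | ∃ (n' : ℕ) (H' : SimpleGraph (Fin n')),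
      0 < n' ∧ n' ≤ n ∧ IsShallowMinorAtDepth G (δ+1) H' ∧
      q = (H'.edgeSet.ncard : ℝ) / (n' : ℝ) } := by
    refine ⟨(n : ℝ) * n, ?_⟩
    rintro q ⟨n', H', hn'0, hn', -, rfl⟩
    have h2 : H'.edgeSet.ncard ≤ Fintype.card (Sym2 (Fin n')) := by
      have := Set.ncard_le_ncard (Set.subset_univ H'.edgeSet) (Set.toFinite _)
      rwa [Set.ncard_univ, Nat.card_eq_fintype_card] at this
    have h3 : Fintype.card (Sym2 (Fin n')) ≤ n' * n' := by
      have := Fintype.card_le_of_surjective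
        (fun p : Fin n' × Fin n' => s(p.1, p.2))
        (fun z => Sym2.ind (fun a b => ⟨(a, b), rfl⟩) z)
      simpa using this
    have hq1 : (H'.edgeSet.ncard : ℝ) / n' ≤ (H'.edgeSet.ncard : ℝ) :=
      div_le_self (by positivity) (by exact_mod_cast hn'0)
    have hq2 : (H'.edgeSet.ncard : ℝ) ≤ (n:ℝ) * n := by
      calc (H'.edgeSet.ncard : ℝ) ≤ (n':ℝ) * (n':ℝ) := by
            exact_mod_cast h2.trans h3
        _ ≤ (n:ℝ) * n := by
            have h4 : (n':ℝ) ≤ (n:ℝ) := Nat.cast_le.mpr hn'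
            have h5 : (0:ℝ) ≤ (n':ℝ) := Nat.cast_nonneg _
            nlinarith
    linarith
  have hqle : (e:ℝ)/(n:ℝ) ≤ nabla0Minors G (δ+1) n := le_csSup hbdd hqmem
  have hq0 : (0:ℝ) ≤ (e:ℝ)/(n:ℝ) := by positivity
  have hnpos : (0:ℝ) < (n:ℝ) := by exact_mod_cast hSpos
  have h1 : (e:ℝ) ≤ nabla0Minors G (δ+1) n * n := (div_le_iff₀ hnpos).mp hqle
  have h2 : (s:ℝ) ≤ (e:ℝ) := Nat.cast_le.mpr hcardE
  have h3 : 0 ≤ nabla0Minors G (δ+1) n := le_trans hq0 hqle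
  nlinarith
end
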